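/- arXiv:1301.4624 — 6 statements merged into one kernel-verified Lean document; each statement's English description precedes it below -/
import Mathlib

section
/- Fix a non-compact well-ordered space J. Every J-convergence space is compactly generated. Consequently, for every topological space X, the identity function JX → kX is continuous. -/
open Set Topology TopologicalSpace

universe u v w

/-- The order topology on `WithTop α`; for a noncompact well-ordered `α` with the order
topology, `WithTop α` with this topology is the one-point (Alexandroff) compactification
`α ∪ {∞_α}`, in which `⊤ = ∞_α` is the maximum. -/
noncomputable instance withTopOrderTopology {α : Type*} [Preorder α] :
    TopologicalSpace (WithTop α) := Preorder.topology _

/-- `I` is almost closed in the ordered topological space `S`: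
`closure I \ I = {ℓ}` where `ℓ = min {s ∈ S | I < s}`. -/
def AlmostClosedIn {S : Type*} [LinearOrder S] [TopologicalSpace S] (I : Set S) : Prop :=
  ∃ ℓ : S, closure I \ I = {ℓ} ∧ IsLeast {s : S | ∀ i ∈ I, i < s} ℓ

/-- `I ⊆ J` is almost closed in `J ∪ {∞_J}` (modeled as `WithTop J` with the order topology). -/
def AlmostClosed {J : Type*} [LinearOrder J] (I : Set J) : Prop :=
  AlmostClosedIn ((fun j : J => (j : WithTop J)) '' I)

/-- A subset `C ⊆ X` is `J`-closed: for every almost closed `I ⊆ J` and continuous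
`f : I ∪ {∞_I} → X` (where `I ∪ {∞_I} = WithTop ↥I` is the one-point compactification of
`I` with its internal order topology) with `f(I) ⊆ C` one has `f(∞_I) ∈ C`. -/
def JClosedSet (J : Type v) [LinearOrder J] (X : Type u) [TopologicalSpace X] (C : Set X) : Prop :=
  ∀ I : Set J, AlmostClosed I → ∀ f : WithTop ↥I → X, Continuous f →
    (∀ i : ↥I, f (WithTop.some i) ∈ C) → f ⊤ ∈ C

/-- `U ⊆ X` is `J`-open iff its complement is `J`-closed. -/
def JOpenSet (J : Type v) [LinearOrder J] (X : Type u) [TopologicalSpace X] (U : Set X) : Prop :=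
  JClosedSet J X Uᶜ

/-- `X` is a `J`-convergence space. -/
def IsJConvergence (J : Type v) [LinearOrder J] (X : Type u) [TopologicalSpace X] : Prop :=
  ∀ A : Set X, ¬ IsClosed A →
    ∃ I : Set J, AlmostClosed I ∧ ∃ f : WithTop ↥I → X, Continuous f ∧
      (∀ i : ↥I, f (WithTop.some i) ∈ A) ∧ f ⊤ ∉ A

/-- `JX`: the topology of `J`-open sets. -/
noncomputable def jTop (J : Type v) [LinearOrder J] (X : Type u) [tX : TopologicalSpace X] :
    TopologicalSpace X := generateFrom {U : Set X | JOpenSet J X U}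

/-- `K` is a compact Hausdorff witness for the failure of `A` to be closed. -/
def CGWitness (K : Type v) [tK : TopologicalSpace K] (X : Type u) [TopologicalSpace X]
    (A : Set X) : Prop :=
  CompactSpace K ∧ T2Space K ∧ ∃ f : K → X, Continuous f ∧ ¬ IsClosed (f ⁻¹' A)

/-- `X` is compactly generated. -/
def CompactlyGen.{v', u'} (X : Type u') [TopologicalSpace X] : Prop :=
  ∀ A : Set X, ¬ IsClosed A → ∃ (K : Type v') (tK : TopologicalSpace K), @CGWitness K tK X _ A

/-- `kX`: `U` is open iff `f ⁻¹ U` is open for every continuous map from a compact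
Hausdorff space. -/
def kTop.{v', u'} (X : Type u') [tX : TopologicalSpace X] : TopologicalSpace X :=
  generateFrom {U : Set X |
    ∀ (K : Type v') (tK : TopologicalSpace K), @CompactSpace K tK → @T2Space K tK →
      ∀ f : K → X, Continuous[tK, tX] f → IsOpen[tK] (f ⁻¹' U)}

/-- The directed topology on the successor `J' ∪ {∞} = WithTop J'`: generated by singletons
`{j}` and final segments `(j, ∞]` for `j ∈ J'`. -/
def directedTopology (J' : Type*) [Preorder J'] : TopologicalSpace (WithTop J') :=
  generateFrom {s : Set (WithTop J') |
    (∃ j : J', s = {WithTop.some j}) ∨ ∃ j : J', s = Ioi (WithTop.some j)}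

/-- `J'` witnesses transfinite convergence into `A`. -/
def TransfiniteWitness (J' : Type v) [LinearOrder J'] (X : Type u) [TopologicalSpace X]
    (A : Set X) : Prop :=
  WellFoundedLT J' ∧ Nonempty J' ∧ NoMaxOrder J' ∧
    ∃ f : WithTop J' → X, Continuous[directedTopology J', _] f ∧
      (∀ j : J', f (WithTop.some j) ∈ A) ∧ f ⊤ ∉ A

/-- `X` is a transfinite sequential space. -/
def TransfiniteSequential.{v', u'} (X : Type u') [TopologicalSpace X] : Prop :=
  ∀ A : Set X, ¬ IsClosed A →
    ∃ (J' : Type v') (lo : LinearOrder J'), @TransfiniteWitness J' lo X _ A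

/-- `X` is a `J`-unique convergence space. -/
def JUnique (J : Type v) [LinearOrder J] (X : Type u) [TopologicalSpace X] : Prop :=
  ∀ I : Set J, AlmostClosed I → ∀ f g : WithTop ↥I → X, Continuous f → Continuous g →
    (∀ i : ↥I, f (WithTop.some i) = g (WithTop.some i)) → f = g

/-- The set `M(X,Y)` of continuous maps between spaces with explicitly given topologies. -/
def Cts (X : Type u) (Y : Type w) (tX : TopologicalSpace X) (tY : TopologicalSpace Y) :=
  {f : X → Y // Continuous[tX, tY] f}

/-- The `𝒥`-open topology on `M(X,Y)`, generated by the sets `W(t,U)`. -/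
noncomputable def mjTop (J : Type v) [LinearOrder J] {X : Type u} {Y : Type w}
    (tX : TopologicalSpace X) (tY : TopologicalSpace Y) :
    TopologicalSpace (Cts X Y tX tY) :=
  generateFrom {W : Set (Cts X Y tX tY) |
    ∃ I : Set J, AlmostClosed I ∧ ∃ t : WithTop ↥I → X, Continuous[_, tX] t ∧
      ∃ U : Set Y, IsOpen[tY] U ∧ W = {f | ∀ z : WithTop ↥I, f.1 (t z) ∈ U}}

noncomputable def auxBot {α : Type*} [LinearOrder α] [WellFoundedLT α] [Nonempty α] :
    OrderBot α where
  bot := (IsWellFounded.wf (r := ((· < ·) : α → α → Prop))).min Set.univ univ_nonempty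
  bot_le a := not_lt.1 ((IsWellFounded.wf).not_lt_min _ (mem_univ a))

lemma aux_key {J : Type v} [LinearOrder J] [WellFoundedLT J] (I : Set J)
    (hI : AlmostClosed I) : Nonempty ↥I ∧ NoMaxOrder ↥I := by
  obtain ⟨ℓ, hcl, hleast⟩ := hI
  have hℓ : ℓ ∈ closure ((fun j : J => (j : WithTop J)) '' I) := by
    have : ℓ ∈ ({ℓ} : Set (WithTop J)) := rfl
    rw [← hcl] at this
    exact this.1
  have hne : I.Nonempty := by
    rcases (closure_nonempty_iff.1 ⟨ℓ, hℓ⟩) with ⟨x, i, hi, rfl⟩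
    exact ⟨i, hi⟩
  haveI : OrderTopology (WithTop J) := ⟨rfl⟩
  refine ⟨⟨⟨hne.choose, hne.choose_spec⟩⟩, ⟨fun a => ?_⟩⟩
  have ha : ((a : J) : WithTop J) < ℓ := hleast.1 _ (mem_image_of_mem _ a.2)
  have := (mem_closure_iff.1 hℓ) (Ioi ((a : J) : WithTop J)) isOpen_Ioi ha
  rcases this with ⟨x, hx1, i, hi, rfl⟩
  exact ⟨⟨i, hi⟩, Subtype.mk_lt_mk.2 (WithTop.coe_lt_coe.1 hx1)⟩

lemma aux_top_mem {J : Type v} [LinearOrder J] [WellFoundedLT J] (I : Set J)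
    (hI : AlmostClosed I) : (⊤ : WithTop ↥I) ∈ closure ({(⊤ : WithTop ↥I)}ᶜ) := by
  obtain ⟨hne, hnomax⟩ := aux_key I hI
  haveI := hne; haveI := hnomax
  haveI : OrderTopology (WithTop ↥I) := ⟨rfl⟩
  have hlub : IsLUB ({(⊤ : WithTop ↥I)}ᶜ) ⊤ := by
    constructor
    · intro x _; exact le_top
    · intro b hb
      by_contra hb'
      rcases WithTop.ne_top_iff_exists.1 (LT.lt.ne (lt_of_not_ge hb')) with ⟨c, rfl⟩
      obtain ⟨d, hd⟩ := exists_gt c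
      have := hb (show ((d : ↥I) : WithTop ↥I) ∈ ({(⊤ : WithTop ↥I)}ᶜ) by simp)
      exact absurd (WithTop.coe_le_coe.1 this) (not_le.2 hd)
  exact hlub.mem_closure ⟨((Classical.arbitrary ↥I : ↥I) : WithTop ↥I), by simp⟩

lemma aux_compact {J : Type v} [LinearOrder J] [WellFoundedLT J] (I : Set J)
    (hI : AlmostClosed I) : CompactSpace (WithTop ↥I) ∧ T2Space (WithTop ↥I) := by
  haveI := (aux_key I hI).1
  letI : OrderBot ↥I := auxBot
  letI : ConditionallyCompleteLinearOrderBot ↥I :=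
    WellFoundedLT.conditionallyCompleteLinearOrderBot ↥I
  haveI : OrderTopology (WithTop ↥I) := ⟨rfl⟩
  exact ⟨inferInstance, inferInstance⟩

-- STATEMENT 12
theorem stmt12 {J : Type v} [LinearOrder J] [WellFoundedLT J] [TopologicalSpace J]
    [OrderTopology J] [NoncompactSpace J] :
    (∀ (X : Type u) [TopologicalSpace X], IsJConvergence J X → CompactlyGen.{v} X) ∧
      ∀ (X : Type u) (tX : TopologicalSpace X),
        Continuous[@jTop J _ X tX, @kTop.{v} X tX] id := by
  have main : ∀ (X : Type u) [TopologicalSpace X], IsJConvergence J X → CompactlyGen.{v} X := by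
    intro X _ hJ A hA
    obtain ⟨I, hI, f, hf, hfA, hfT⟩ := hJ A hA
    obtain ⟨hK, hT2⟩ := aux_compact I hI
    refine ⟨WithTop ↥I, inferInstance, hK, hT2, f, hf, ?_⟩
    have hpre : f ⁻¹' A = {(⊤ : WithTop ↥I)}ᶜ := by
      ext x
      cases x with
      | top => simp [hfT]
      | coe i => simp [hfA i, WithTop.coe_ne_top]
    rw [hpre]
    intro hcl
    exact absurd (hcl.closure_eq ▸ aux_top_mem I hI) (by simp)
  refine ⟨main, fun X tX => ?_⟩
  refine continuous_generateFrom_iff.mpr fun U hU => ?_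
  rw [Set.preimage_id]
  refine isOpen_generateFrom_of_mem ?_
  intro I hI f hf hC
  obtain ⟨hK, hT2⟩ := aux_compact I hI
  intro hmem
  have hop : IsOpen (f ⁻¹' U) := hU (WithTop ↥I) _ hK hT2 f hf
  obtain ⟨x, hx1, hx2⟩ := (mem_closure_iff.1 (aux_top_mem I hI)) (f ⁻¹' U) hop hmem
  rcases WithTop.ne_top_iff_exists.1 hx2 with ⟨i, rfl⟩
  exact hC i hx1
end

section
/- Suppose X is a Hausdorff topological space and there exists a countably infinite subset A ⊆ X such that A is not closed in X and every sequence of points of A that converges in X is eventually constant. Then X is not a transfinite sequential space. -/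
open Set Topology TopologicalSpace

universe u v w

-- AUXILIARY LEMMAS

lemma dirTop_top_mem {J' : Type*} [LinearOrder J'] [Nonempty J'] {U : Set (WithTop J')}
    (hU : TopologicalSpace.GenerateOpen {s : Set (WithTop J') |
      (∃ j : J', s = {WithTop.some j}) ∨ ∃ j : J', s = Ioi (WithTop.some j)} U) :
    ⊤ ∈ U → ∃ j : J', Ioi (WithTop.some j) ⊆ U := by
  induction hU with
  | basic s hs =>
    intro hT
    rcases hs with ⟨j, rfl⟩ | ⟨j, rfl⟩
    · exact absurd (Set.mem_singleton_iff.1 hT) WithTop.top_ne_coe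
    · exact ⟨j, subset_rfl⟩
  | univ => exact fun _ => ⟨Classical.arbitrary J', fun _ _ => trivial⟩
  | inter s t _ _ ihs iht =>
    rintro ⟨hs, ht⟩
    obtain ⟨j₁, h₁⟩ := ihs hs
    obtain ⟨j₂, h₂⟩ := iht ht
    refine ⟨max j₁ j₂, fun k hk => ⟨h₁ ?_, h₂ ?_⟩⟩
    · exact lt_of_le_of_lt (WithTop.coe_le_coe.2 (le_max_left j₁ j₂)) hk
    · exact lt_of_le_of_lt (WithTop.coe_le_coe.2 (le_max_right j₁ j₂)) hk
  | sUnion S hS ih =>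
    rintro ⟨s, hsS, hTs⟩
    obtain ⟨j, hj⟩ := ih s hsS hTs
    exact ⟨j, hj.trans (Set.subset_sUnion_of_mem hsS)⟩

-- STATEMENT 14
theorem stmt14 {X : Type u} [TopologicalSpace X] [T2Space X] (A : Set X)
    (hcount : A.Countable) (hinf : A.Infinite) (hA : ¬ IsClosed A)
    (hseq : ∀ u : ℕ → X, (∀ n, u n ∈ A) → ∀ x : X,
      Filter.Tendsto u Filter.atTop (nhds x) → ∃ N, ∀ n ≥ N, u n = u N) :
    ¬ TransfiniteSequential.{v} X := by
  intro hTS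
  obtain ⟨J', lo, hwf, hne, hnomax, f, hf, hmem, htop⟩ := hTS A hA
  haveI := hne
  haveI := hnomax
  -- key continuity fact
  have key : ∀ V : Set X, IsOpen V → f ⊤ ∈ V →
      ∃ j : J', ∀ k : J', j < k → f (WithTop.some k) ∈ V := by
    intro V hV hTV
    have hopen : IsOpen[directedTopology J'] (f ⁻¹' V) :=
      @Continuous.isOpen_preimage _ _ (directedTopology J') _ f hf V hV
    obtain ⟨j, hj⟩ := dirTop_top_mem (hU := hopen) hTV
    exact ⟨j, fun k hk => hj (Set.mem_Ioi.2 (WithTop.coe_lt_coe.2 hk))⟩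
  set F : J' → X := fun j => f (WithTop.some j) with hF
  by_cases hcof : ∃ a ∈ A, ∀ j : J', ∃ k : J', j < k ∧ F k = a
  · obtain ⟨a, haA, hcf⟩ := hcof
    have hne' : f ⊤ ≠ a := fun h => htop (h ▸ haA)
    obtain ⟨j, hj⟩ := key {a}ᶜ (isOpen_compl_singleton) hne'
    obtain ⟨k, hjk, hFk⟩ := hcf j
    exact (hj k hjk) hFk
  · push_neg at hcof
    -- every fiber is bounded
    have hbd : ∀ a ∈ A, ∃ b : J', ∀ k : J', F k = a → k ≤ b := by
      intro a ha
      obtain ⟨b, hb⟩ := hcof a ha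
      exact ⟨b, fun k hk => le_of_not_gt (fun hlt => hb k hlt hk)⟩
    classical
    let g : X → J' := fun a =>
      if h : ∃ b : J', ∀ k : J', F k = a → k ≤ b then h.choose else Classical.arbitrary J'
    have hg : ∀ a ∈ A, ∀ k : J', F k = a → k ≤ g a := by
      intro a ha k hk
      have h := hbd a ha
      simp only [g, dif_pos h]
      exact h.choose_spec k hk
    obtain ⟨e, he⟩ := hcount.exists_eq_range hinf.nonempty
    -- build a strictly increasing cofinal-enough sequence
    let u : ℕ → J' := fun n =>
      Nat.rec (Classical.arbitrary J')
        (fun n prev => (exists_gt (max prev (g (e n)))).choose) n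
    have hu : ∀ n, max (u n) (g (e n)) < u (n + 1) := fun n =>
      (exists_gt (max (u n) (g (e n)))).choose_spec
    have humono : StrictMono u :=
      strictMono_nat_of_lt_succ fun n => lt_of_le_of_lt (le_max_left _ _) (hu n)
    have hcofseq : ∀ j : J', ∃ N : ℕ, ∀ n ≥ N, j < u n := by
      intro j
      have hFA : F j ∈ A := hmem j
      obtain ⟨m, hm⟩ : ∃ m, e m = F j := by
        have : F j ∈ Set.range e := he ▸ hFA
        exact this.imp fun m h => h
      refine ⟨m + 1, fun n hn => ?_⟩
      have h1 : j ≤ g (e m) := hg (e m) (he ▸ Set.mem_range_self m) j hm.symm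
      have h2 : g (e m) < u (m + 1) := lt_of_le_of_lt (le_max_right _ _) (hu m)
      exact lt_of_le_of_lt h1 (lt_of_lt_of_le h2 (humono.monotone hn))
    -- the sequence F ∘ u converges to f ⊤
    have htend : Filter.Tendsto (fun n => F (u n)) Filter.atTop (nhds (f ⊤)) := by
      rw [tendsto_nhds]
      intro V hV hTV
      obtain ⟨j, hj⟩ := key V hV hTV
      obtain ⟨N, hN⟩ := hcofseq j
      exact Filter.eventually_atTop.2 ⟨N, fun n hn => hj (u n) (hN n hn)⟩
    obtain ⟨N, hNc⟩ := hseq (fun n => F (u n)) (fun n => hmem (u n)) (f ⊤) htend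
    have htend2 : Filter.Tendsto (fun n => F (u n)) Filter.atTop (nhds (F (u N))) := by
      refine Filter.Tendsto.congr' ?_ tendsto_const_nhds
      exact Filter.eventually_atTop.2 ⟨N, fun n hn => (hNc n hn).symm⟩
    have : f ⊤ = F (u N) := tendsto_nhds_unique htend htend2
    exact htop (this ▸ hmem (u N))
end

section
/- Let ω denote the natural numbers with the discrete topology and let X = βω be its Stone–Čech compactification. Then X is compactly generated but X is not a transfinite sequential space. -/
open Set Topology TopologicalSpace

universe u v w

section StmtFifteenAux
open Filter
open scoped Classical

/-- Characteristic function of `S ⊆ ℕ` valued in `Bool`. -/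
noncomputable def stmt15chi (S : Set ℕ) : ℕ → Bool := fun n => if n ∈ S then true else false

/-- The Stone–Čech extension of the characteristic function. -/
noncomputable def stmt15bext (S : Set ℕ) : StoneCech ℕ → Bool :=
  stoneCechExtend (continuous_of_discreteTopology (f := stmt15chi S))

lemma stmt15bext_unit (S : Set ℕ) (n : ℕ) : stmt15bext S (stoneCechUnit n) = stmt15chi S n :=
  congrFun (stoneCechExtend_extends _) n

lemma stmt15bext_cont (S : Set ℕ) : Continuous (stmt15bext S) := continuous_stoneCechExtend _

lemma stmt15closure_img_subset (S : Set ℕ) :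
    closure (stoneCechUnit '' S) ⊆ stmt15bext S ⁻¹' {true} := by
  apply closure_minimal
  · rintro _ ⟨n, hn, rfl⟩
    simp [stmt15bext_unit, stmt15chi, hn]
  · exact (isClosed_discrete _).preimage (stmt15bext_cont S)

lemma stmt15disjoint_closures {S T : Set ℕ} (h : Disjoint S T) :
    Disjoint (closure (stoneCechUnit '' S)) (closure (stoneCechUnit '' T)) := by
  have hT : closure (stoneCechUnit '' T) ⊆ stmt15bext S ⁻¹' {false} := by
    apply closure_minimal
    · rintro _ ⟨n, hn, rfl⟩
      have : n ∉ S := fun hS => h.le_bot ⟨hS, hn⟩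
      simp [stmt15bext_unit, stmt15chi, this]
    · exact (isClosed_discrete _).preimage (stmt15bext_cont S)
  refine Set.disjoint_left.2 fun x hx1 hx2 => ?_
  have h1 := stmt15closure_img_subset S hx1
  have h2 := hT hx2
  simp only [mem_preimage, mem_singleton_iff] at h1 h2
  rw [h1] at h2; exact Bool.noConfusion h2

lemma stmt15unit_injective : Function.Injective (stoneCechUnit : ℕ → StoneCech ℕ) := by
  intro a b hab
  by_contra hne
  have h1 := stmt15bext_unit {a} a
  have h2 := stmt15bext_unit {a} b
  rw [← hab, h1] at h2
  simp [stmt15chi, Ne.symm hne] at h2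

lemma stmt15unit_isolated (n : ℕ) : IsOpen ({stoneCechUnit n} : Set (StoneCech ℕ)) := by
  have hopen : IsOpen (stmt15bext {n} ⁻¹' {true}) :=
    (isOpen_discrete _).preimage (stmt15bext_cont _)
  have hsub : stmt15bext {n} ⁻¹' {true} ⊆ {stoneCechUnit n} := by
    intro x hx
    by_contra hne
    have hx' : x ∈ closure (stoneCechUnit '' ({n}ᶜ : Set ℕ)) := by
      have hdense : x ∈ closure (range (stoneCechUnit : ℕ → StoneCech ℕ)) :=
        denseRange_stoneCechUnit x
      have : (range (stoneCechUnit : ℕ → StoneCech ℕ)) =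
          stoneCechUnit '' ({n} : Set ℕ) ∪ stoneCechUnit '' ({n}ᶜ : Set ℕ) := by
        rw [← image_union, union_compl_self, image_univ]
      rw [this, closure_union] at hdense
      rcases hdense with h | h
      · exact absurd (by simpa using (closure_minimal (by simp) isClosed_singleton) h) hne
      · exact h
    have hfalse : closure (stoneCechUnit '' ({n}ᶜ : Set ℕ)) ⊆ stmt15bext {n} ⁻¹' {false} := by
      apply closure_minimal
      · rintro _ ⟨m, hm, rfl⟩
        simp only [mem_compl_iff, mem_singleton_iff] at hm
        simp [stmt15bext_unit, stmt15chi, hm]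
      · exact (isClosed_discrete _).preimage (stmt15bext_cont _)
    have h2 := hfalse hx'
    simp only [mem_preimage, mem_singleton_iff] at hx h2
    rw [hx] at h2; exact Bool.noConfusion h2
  have heq : stmt15bext {n} ⁻¹' {true} = {stoneCechUnit n} := by
    apply Subset.antisymm hsub
    rintro x rfl
    simp [mem_preimage, stmt15bext_unit, stmt15chi]
  rw [← heq]; exact hopen

lemma stmt15range_unit_not_closed :
    ¬ IsClosed (range (stoneCechUnit : ℕ → StoneCech ℕ)) := by
  intro hcl
  have huniv : range (stoneCechUnit : ℕ → StoneCech ℕ) = univ :=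
    hcl.closure_eq ▸ denseRange_stoneCechUnit.closure_range
  have hdisc : DiscreteTopology (StoneCech ℕ) := by
    rw [discreteTopology_iff_isOpen_singleton]
    intro x
    have hx : x ∈ range (stoneCechUnit : ℕ → StoneCech ℕ) := huniv ▸ mem_univ x
    obtain ⟨n, rfl⟩ := hx
    exact stmt15unit_isolated n
  have : Finite (StoneCech ℕ) := finite_of_compact_of_discrete
  exact (Finite.of_injective _ stmt15unit_injective).not_infinite (by infer_instance)

lemma stmt15seq_lemma (a : ℕ → ℕ) (p : StoneCech ℕ)
    (h : Tendsto (fun n => stoneCechUnit (a n)) atTop (𝓝 p))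
    (hp : p ∉ range (stoneCechUnit : ℕ → StoneCech ℕ)) : False := by
  by_cases hv : ∃ v, {n | a n = v}.Infinite
  · obtain ⟨v, hv⟩ := hv
    obtain ⟨φ, hφ, hval⟩ := extraction_of_frequently_atTop
      (Nat.frequently_atTop_iff_infinite.2 hv)
    have h1 : Tendsto (fun n => stoneCechUnit (a (φ n))) atTop (𝓝 p) :=
      h.comp hφ.tendsto_atTop
    have h2 : Tendsto (fun n => stoneCechUnit (a (φ n))) atTop (𝓝 (stoneCechUnit v)) := by
      have : (fun n => stoneCechUnit (a (φ n))) = fun _ => stoneCechUnit v := by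
        funext n; rw [hval n]
      rw [this]; exact tendsto_const_nhds
    exact hp ⟨v, (tendsto_nhds_unique h2 h1)⟩
  · push_neg at hv
    have hfin : ∀ v, {n | a n = v}.Finite := fun v => hv v
    have hat : Tendsto a atTop atTop := by
      rw [tendsto_atTop]
      intro b
      have hfin2 : ({n | a n < b}).Finite := by
        have hsub : {n | a n < b} ⊆ ⋃ v ∈ Iio b, {n | a n = v} := fun n hn =>
          mem_biUnion hn rfl
        exact (((finite_Iio b).biUnion fun v _ => hfin v)).subset hsub
      rw [← Nat.cofinite_eq_atTop]
      exact (Set.Finite.eventually_cofinite_notMem hfin2).mono fun n hn => not_lt.1 hn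
    obtain ⟨φ, hφ, hmono⟩ := strictMono_subseq_of_tendsto_atTop hat
    have hinj : Function.Injective (a ∘ φ) := hmono.injective
    set E : Set ℕ := (a ∘ φ) '' {n | Even n} with hE
    set O : Set ℕ := (a ∘ φ) '' {n | ¬ Even n} with hO
    have hdisj : Disjoint E O := by
      rw [Set.disjoint_left]
      rintro _ ⟨n, hn, rfl⟩ ⟨m, hm, hval⟩
      exact hm (hinj hval ▸ hn)
    have key : ∀ ψ : ℕ → ℕ, StrictMono ψ →
        Tendsto (fun n => stoneCechUnit (a (φ (ψ n)))) atTop (𝓝 p) := fun ψ hψ =>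
      h.comp ((hφ.comp hψ).tendsto_atTop)
    have hpe : p ∈ closure (stoneCechUnit '' E) := by
      have h1 : Tendsto (fun n => stoneCechUnit (a (φ (2 * n)))) atTop (𝓝 p) :=
        key _ (fun i j hij => by omega)
      exact mem_closure_of_tendsto h1 (Eventually.of_forall fun n =>
        ⟨(a ∘ φ) (2 * n), ⟨2 * n, ⟨n, two_mul n⟩, rfl⟩, rfl⟩)
    have hpo : p ∈ closure (stoneCechUnit '' O) := by
      have h1 : Tendsto (fun n => stoneCechUnit (a (φ (2 * n + 1)))) atTop (𝓝 p) :=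
        key _ (fun i j hij => by omega)
      exact mem_closure_of_tendsto h1 (Eventually.of_forall fun n =>
        ⟨(a ∘ φ) (2 * n + 1), ⟨2 * n + 1, by simp [Nat.even_add_one, parity_simps], rfl⟩, rfl⟩)
    exact (stmt15disjoint_closures hdisj).le_bot ⟨hpe, hpo⟩

lemma stmt15directed_nhds {J' : Type*} [LinearOrder J'] [Nonempty J'] {V : Set (WithTop J')}
    (hV : IsOpen[directedTopology J'] V) (htop : ⊤ ∈ V) :
    ∃ j : J', ∀ k : J', j < k → (WithTop.some k) ∈ V := by
  have hgen : GenerateOpen {s : Set (WithTop J') |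
      (∃ j : J', s = {WithTop.some j}) ∨ ∃ j : J', s = Ioi (WithTop.some j)} V := hV
  clear hV
  induction hgen with
  | basic s hs =>
    rcases hs with ⟨j, rfl⟩ | ⟨j, rfl⟩
    · exact absurd htop (by simp)
    · exact ⟨j, fun k hk => by simpa using (WithTop.coe_lt_coe.2 hk)⟩
  | univ => exact ⟨Classical.arbitrary J', fun k _ => mem_univ _⟩
  | inter s t _ _ ihs iht =>
    obtain ⟨j1, h1⟩ := ihs htop.1
    obtain ⟨j2, h2⟩ := iht htop.2
    exact ⟨max j1 j2, fun k hk =>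
      ⟨h1 k (lt_of_le_of_lt (le_max_left _ _) hk), h2 k (lt_of_le_of_lt (le_max_right _ _) hk)⟩⟩
  | sUnion S _ ih =>
    obtain ⟨s, hsS, hs⟩ := htop
    obtain ⟨j, hj⟩ := ih s hsS hs
    exact ⟨j, fun k hk => ⟨s, hsS, hj k hk⟩⟩

end StmtFifteenAux

open Filter

-- STATEMENT 15
theorem stmt15 :
    CompactlyGen.{0} (StoneCech ℕ) ∧ ¬ TransfiniteSequential.{v} (StoneCech ℕ) := by
  constructor
  · intro A hA
    exact ⟨StoneCech ℕ, inferInstance, inferInstance, inferInstance, id, continuous_id,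
      by simpa using hA⟩
  · intro h
    obtain ⟨J', lo, _, ⟨j₀⟩, hnomax, f, hf, hmem, htop⟩ :=
      h (range (stoneCechUnit : ℕ → StoneCech ℕ)) stmt15range_unit_not_closed
    have : Nonempty J' := ⟨j₀⟩
    have : NoMaxOrder J' := hnomax
    set p := f ⊤ with hp
    have H : ∀ U : Set (StoneCech ℕ), IsOpen U → p ∈ U →
        ∃ j : J', ∀ k : J', j < k → f (WithTop.some k) ∈ U := by
      intro U hU hpU
      exact stmt15directed_nhds (@Continuous.isOpen_preimage _ _ (directedTopology J') _ f hf U hU) hpU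
    choose m hm using hmem
    by_cases hcof : ∃ n : ℕ, ∀ j : J', ∃ k : J', j < k ∧ f (WithTop.some k) = stoneCechUnit n
    · obtain ⟨n, hn⟩ := hcof
      have hpn : p = stoneCechUnit n := by
        by_contra hne
        have hU : IsOpen ({stoneCechUnit n}ᶜ : Set (StoneCech ℕ)) :=
          isClosed_singleton.isOpen_compl
        obtain ⟨j, hj⟩ := H _ hU (by simpa using hne)
        obtain ⟨k, hk, hfk⟩ := hn j
        exact (hj k hk) hfk
      exact htop (hpn ▸ mem_range_self n)
    · push_neg at hcof
      choose b hb using hcof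
      by_cases hbd : ∃ c : J', ∀ n : ℕ, b n ≤ c
      · obtain ⟨c, hc⟩ := hbd
        obtain ⟨k, hk⟩ := exists_gt c
        exact hb (m k) k (lt_of_le_of_lt (hc (m k)) hk) (hm k).symm
      · push_neg at hbd
        choose g hg using hbd
        set s : ℕ → J' := fun n => Nat.rec (b 0) (fun n sn => b (g (max sn (b (n + 1))))) n
          with hs
        have hssucc : ∀ n, s (n + 1) = b (g (max (s n) (b (n + 1)))) := fun n => rfl
        have hs_gt : ∀ n, max (s n) (b (n + 1)) < s (n + 1) := by
          intro n; rw [hssucc]; exact hg _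
        have hmono : StrictMono s :=
          strictMono_nat_of_lt_succ fun n => lt_of_le_of_lt (le_max_left _ _) (hs_gt n)
        have hsb : ∀ n, b n ≤ s n := by
          intro n
          cases n with
          | zero => exact le_of_eq rfl
          | succ n => exact le_of_lt (lt_of_le_of_lt (le_max_right _ _) (hs_gt n))
        have htend : Tendsto (fun n => stoneCechUnit (m (s n))) atTop (𝓝 p) := by
          rw [tendsto_nhds]
          intro U hU hpU
          obtain ⟨j, hj⟩ := H U hU hpU
          refine eventually_atTop.2 ⟨g j, fun n hn => ?_⟩
          have hjs : j < s n :=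
            lt_of_lt_of_le (lt_of_lt_of_le (hg j) (hsb (g j))) (hmono.monotone hn)
          have := hj (s n) hjs
          show stoneCechUnit (m (s n)) ∈ U
          rw [hm (s n)]
          exact this
        exact stmt15seq_lemma _ p htend htop
end

section
/- Let J be an unbounded well-ordered set in which every countable subset is bounded (for example, J = ω₁, the set of countable ordinals), and let X = J ∪ {∞_J} be its successor equipped with the directed topology. Then X is a transfinite sequential space but X is not compactly generated. -/
open Set Topology TopologicalSpace

universe u v w

-- ===== auxiliary material =====

attribute [-instance] withTopOrderTopology

section Aux

variable {J : Type*} [LinearOrder J]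

/-- Characterization of open sets in the directed topology. -/
theorem dOpen_iff [Nonempty J] (S : Set (WithTop J)) :
    IsOpen[directedTopology J] S ↔
      (⊤ ∈ S → ∃ j : J, Ioi (WithTop.some j) ⊆ S) := by
  letI : TopologicalSpace (WithTop J) := directedTopology J
  constructor
  · intro h
    induction h with
    | basic s hs =>
      rcases hs with ⟨j, rfl⟩ | ⟨j, rfl⟩
      · intro h; simp at h
      · intro _; exact ⟨j, subset_rfl⟩
    | univ =>
      intro _; exact ⟨Classical.arbitrary J, subset_univ _⟩
    | inter s t _ _ ihs iht =>
      intro h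
      obtain ⟨j1, hj1⟩ := ihs h.1
      obtain ⟨j2, hj2⟩ := iht h.2
      refine ⟨max j1 j2, fun x hx => ⟨hj1 ?_, hj2 ?_⟩⟩
      · exact Set.mem_Ioi.mpr (lt_of_le_of_lt (by exact_mod_cast le_max_left j1 j2) (Set.mem_Ioi.mp hx))
      · exact Set.mem_Ioi.mpr (lt_of_le_of_lt (by exact_mod_cast le_max_right j1 j2) (Set.mem_Ioi.mp hx))
    | sUnion s _ ih =>
      intro h
      obtain ⟨t, ht, hmt⟩ := h
      obtain ⟨j, hj⟩ := ih t ht hmt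
      exact ⟨j, hj.trans (subset_sUnion_of_mem ht)⟩
  · intro h
    by_cases htop : ⊤ ∈ S
    · obtain ⟨j₀, hj₀⟩ := h htop
      have hS : S = (⋃ x ∈ {x ∈ S | x ≠ ⊤}, {x}) ∪ Ioi (WithTop.some j₀) := by
        ext x
        simp only [Set.mem_union, Set.mem_iUnion, Set.mem_setOf_eq, Set.mem_singleton_iff]
        constructor
        · intro hx
          by_cases hxt : x = ⊤
          · subst hxt; right; exact WithTop.coe_lt_top j₀
          · exact Or.inl ⟨x, ⟨hx, hxt⟩, rfl⟩
        · rintro (⟨y, ⟨hy, _⟩, rfl⟩ | hx)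
          · exact hy
          · exact hj₀ hx
      rw [hS]
      apply IsOpen.union
      · refine isOpen_biUnion fun x hx => ?_
        obtain ⟨j, rfl⟩ := WithTop.ne_top_iff_exists.mp hx.2 |>.imp fun a ha => ha.symm
        exact TopologicalSpace.GenerateOpen.basic _ (Or.inl ⟨j, rfl⟩)
      · exact TopologicalSpace.GenerateOpen.basic _ (Or.inr ⟨j₀, rfl⟩)
    · have hS : S = ⋃ x ∈ S, {x} := by simp
      rw [hS]
      refine isOpen_biUnion fun x hx => ?_
      have hxt : x ≠ ⊤ := fun h => htop (h ▸ hx)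
      obtain ⟨j, rfl⟩ := WithTop.ne_top_iff_exists.mp hxt |>.imp fun a ha => ha.symm
      exact TopologicalSpace.GenerateOpen.basic _ (Or.inl ⟨j, rfl⟩)

theorem dOpen_Ioi [Nonempty J] (j : J) :
    IsOpen[directedTopology J] (Ioi (WithTop.some j)) :=
  TopologicalSpace.GenerateOpen.basic _ (Or.inr ⟨j, rfl⟩)

theorem dOpen_singleton [Nonempty J] (j : J) :
    IsOpen[directedTopology J] ({WithTop.some j} : Set (WithTop J)) :=
  TopologicalSpace.GenerateOpen.basic _ (Or.inl ⟨j, rfl⟩)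

end Aux

-- STATEMENT 16
theorem stmt16 {J : Type u} [LinearOrder J] [WellFoundedLT J] [Nonempty J] [NoMaxOrder J]
    (hcb : ∀ S : Set J, S.Countable → BddAbove S) :
    @TransfiniteSequential.{u} (WithTop J) (directedTopology J) ∧
      ¬ @CompactlyGen.{v} (WithTop J) (directedTopology J) := by
  letI : TopologicalSpace (WithTop J) := directedTopology J
  constructor
  · -- transfinite sequential
    intro A hA
    have hAc : ¬ IsOpen[directedTopology J] Aᶜ := fun h => hA (isOpen_compl_iff.mp h)
    rw [dOpen_iff] at hAc
    push_neg at hAc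
    obtain ⟨htop, hcof⟩ := hAc
    have htop' : (⊤ : WithTop J) ∉ A := htop
    have hcof' : ∀ j : J, ∃ a : J, j < a ∧ (a : WithTop J) ∈ A := by
      intro j
      obtain ⟨x, hx1, hx2⟩ := Set.not_subset.mp (hcof j)
      have hxA : x ∈ A := by simpa using hx2
      have hxt : x ≠ ⊤ := fun h => htop' (h ▸ hxA)
      obtain ⟨a, rfl⟩ := WithTop.ne_top_iff_exists.mp hxt
      exact ⟨a, WithTop.coe_lt_coe.mp hx1, hxA⟩
    set A' : Set J := {a : J | (a : WithTop J) ∈ A} with hA'def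
    have hne : Nonempty ↥A' := by
      obtain ⟨a, _, haA⟩ := hcof' (Classical.arbitrary J)
      exact ⟨⟨a, haA⟩⟩
    have hnomax : NoMaxOrder ↥A' := by
      constructor
      rintro ⟨a, ha⟩
      obtain ⟨b, hb, hbA⟩ := hcof' a
      exact ⟨⟨b, hbA⟩, by exact_mod_cast hb⟩
    refine ⟨↥A', inferInstance, inferInstance, hne, hnomax,
      WithTop.map Subtype.val, ?_, ?_, ?_⟩
    · rw [continuous_def]
      intro S hS
      have hS' := (dOpen_iff S).mp hS
      rw [dOpen_iff]
      intro htopS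
      have hmt : WithTop.map (Subtype.val : ↥A' → J) ⊤ = ⊤ := rfl
      have htopS' : (⊤ : WithTop J) ∈ S := by
        simpa [hmt] using htopS
      obtain ⟨j, hj⟩ := hS' htopS'
      obtain ⟨a, haj, haA⟩ := hcof' j
      refine ⟨⟨a, haA⟩, ?_⟩
      intro z hz
      induction z using WithTop.recTopCoe with
      | top =>
        simp only [Set.mem_preimage, hmt]
        exact hj (WithTop.coe_lt_top j)
      | coe b =>
        have hab : a < b.val := by
          have := Set.mem_Ioi.mp hz
          exact_mod_cast this
        simp only [Set.mem_preimage, WithTop.map_coe]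
        exact hj (Set.mem_Ioi.mpr (by exact_mod_cast haj.trans hab))
    · intro i
      exact i.2
    · simpa using htop'
  · -- not compactly generated
    intro hcg
    have hAnc : ¬ IsClosed {x : WithTop J | x ≠ ⊤} := by
      intro h
      have hop : IsOpen[directedTopology J] {x : WithTop J | x ≠ ⊤}ᶜ := h.isOpen_compl
      rw [dOpen_iff] at hop
      obtain ⟨j, hj⟩ := hop (by simp)
      obtain ⟨j', hj'⟩ := exists_gt j
      have : (j' : WithTop J) ∈ {x : WithTop J | x ≠ ⊤}ᶜ :=
        hj (Set.mem_Ioi.mpr (by exact_mod_cast hj'))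
      simp at this
    obtain ⟨K, tK, hK, hT2, f, hf, hnc⟩ := hcg _ hAnc
    apply hnc
    have hpre : f ⁻¹' {x : WithTop J | x ≠ ⊤} = (f ⁻¹' {⊤})ᶜ := by
      ext k; simp
    rw [hpre, isClosed_compl_iff]
    rw [isOpen_iff_mem_nhds]
    intro k0 hk0
    by_contra hnb
    -- every open nbhd of k0 contains a point mapped into J
    have key : ∀ j : J, ∃ p : K × J, f p.1 = WithTop.some p.2 ∧ j < p.2 := by
      intro j
      have hU : IsOpen (f ⁻¹' Ioi (WithTop.some j)) :=
        hf.isOpen_preimage _ (dOpen_Ioi j)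
      have hk0U : k0 ∈ f ⁻¹' Ioi (WithTop.some j) := by
        simp only [Set.mem_preimage]
        have : f k0 = ⊤ := hk0
        rw [this]; exact WithTop.coe_lt_top j
      have hsub : ¬ (f ⁻¹' Ioi (WithTop.some j) ⊆ f ⁻¹' {⊤}) := by
        intro hsub
        exact hnb (Filter.mem_of_superset (hU.mem_nhds hk0U) hsub)
      obtain ⟨k, hk1, hk2⟩ := Set.not_subset.mp hsub
      have hkt : f k ≠ ⊤ := by simpa using hk2
      obtain ⟨a, ha⟩ := WithTop.ne_top_iff_exists.mp hkt
      refine ⟨⟨k, a⟩, ha.symm, ?_⟩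
      have : (j : WithTop J) < a := ha ▸ hk1
      exact_mod_cast this
    choose p hp1 hp2 using key
    -- build a strictly increasing sequence
    let a : ℕ → J := fun n => Nat.rec (Classical.arbitrary J) (fun _ x => (p x).2) n
    have ha : ∀ n, a (n + 1) = (p (a n)).2 := fun n => rfl
    have hamono : StrictMono a := strictMono_nat_of_lt_succ fun n => by
      rw [ha]; exact hp2 (a n)
    let κ : ℕ → K := fun n => (p (a n)).1
    have hκ : ∀ n, f (κ n) = WithTop.some (a (n + 1)) := fun n => hp1 (a n)
    -- cluster point
    have hFne : (Filter.map κ Filter.atTop).NeBot := Filter.map_neBot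
    haveI : CompactSpace K := hK
    obtain ⟨x, hx⟩ := exists_clusterPt_of_compactSpace (Filter.map κ Filter.atTop)
    have hfreq : ∀ U : Set K, IsOpen U → x ∈ U → ∀ N : ℕ, ∃ n ≥ N, κ n ∈ U := by
      intro U hU hxU N
      have hs : κ '' Set.Ici N ∈ Filter.map κ Filter.atTop :=
        Filter.image_mem_map (Filter.mem_atTop N)
      obtain ⟨y, hy1, hy2⟩ := clusterPt_iff_nonempty.mp hx (hU.mem_nhds hxU) hs
      obtain ⟨n, hn, rfl⟩ := hy2
      exact ⟨n, hn, hy1⟩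
    by_cases hfx : f x = ⊤
    · obtain ⟨s, hs⟩ := hcb (Set.range a) (Set.countable_range a)
      have hU : IsOpen (f ⁻¹' Ioi (WithTop.some s)) :=
        hf.isOpen_preimage _ (dOpen_Ioi s)
      have hxU : x ∈ f ⁻¹' Ioi (WithTop.some s) := by
        simp only [Set.mem_preimage, hfx]
        exact WithTop.coe_lt_top s
      obtain ⟨n, -, hn⟩ := hfreq _ hU hxU 0
      have h1 : (s : WithTop J) < f (κ n) := hn
      rw [hκ n] at h1
      have h2 : s < a (n + 1) := by exact_mod_cast h1
      exact absurd (hs (Set.mem_range_self (n + 1))) (not_le.mpr h2)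
    · obtain ⟨b, hb⟩ := WithTop.ne_top_iff_exists.mp hfx
      have hU : IsOpen (f ⁻¹' {WithTop.some b}) :=
        hf.isOpen_preimage _ (dOpen_singleton b)
      have hxU : x ∈ f ⁻¹' {WithTop.some b} := by
        simp only [Set.mem_preimage, Set.mem_singleton_iff]
        exact hb.symm
      obtain ⟨n1, -, hn1⟩ := hfreq _ hU hxU 0
      obtain ⟨n2, hn2ge, hn2⟩ := hfreq _ hU hxU (n1 + 1)
      have e1 : WithTop.some (a (n1 + 1)) = WithTop.some b := (hκ n1) ▸ hn1
      have e2 : WithTop.some (a (n2 + 1)) = WithTop.some b := (hκ n2) ▸ hn2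
      have : a (n1 + 1) = a (n2 + 1) := by
        have := e1.trans e2.symm
        exact_mod_cast this
      have hlt : a (n1 + 1) < a (n2 + 1) :=
        hamono (Nat.succ_lt_succ (Nat.lt_of_succ_le hn2ge))
      exact absurd this (ne_of_lt hlt)
end

section
/- Fix a non-compact well-ordered space J. If X and Y are J-convergence spaces, then the k-product and the J-product coincide: the topologies of X ×_k Y and X ×_J Y on the set X × Y are equal. -/
open Set Topology TopologicalSpace

universe u v w

section Infra

instance withTopOrderTopologyIsOrderTopology {α : Type*} [Preorder α] :
    OrderTopology (WithTop α) := ⟨rfl⟩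

set_option synthInstance.maxHeartbeats 400000 in
instance wfWithTopT2 (α : Type*) [LinearOrder α] : T2Space (WithTop α) := inferInstance

set_option synthInstance.maxHeartbeats 400000 in
instance wfWithTopRegular (α : Type*) [LinearOrder α] : RegularSpace (WithTop α) :=
  inferInstance

/-- Minimum of a nonempty subset of a well-ordered type. -/
noncomputable def wmin {α : Type*} [LT α] [WellFoundedLT α] (s : Set α) (h : s.Nonempty) : α :=
  (wellFounded_lt (α := α)).min s h

theorem wmin_mem {α : Type*} [LT α] [WellFoundedLT α] (s : Set α) (h : s.Nonempty) :
    wmin s h ∈ s := (wellFounded_lt (α := α)).min_mem s h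

theorem wmin_le {α : Type*} [LinearOrder α] [WellFoundedLT α] {s : Set α} (h : s.Nonempty)
    {x : α} (hx : x ∈ s) : wmin s h ≤ x :=
  not_lt.1 ((wellFounded_lt (α := α)).not_lt_min s hx)

noncomputable instance wfOrderBot (α : Type*) [LinearOrder α] [WellFoundedLT α] [Nonempty α] :
    OrderBot α where
  bot := wmin univ univ_nonempty
  bot_le x := wmin_le univ_nonempty (mem_univ x)

noncomputable instance wfCCLOB (α : Type*) [LinearOrder α] [WellFoundedLT α] [Nonempty α] :
    ConditionallyCompleteLinearOrderBot α :=
  WellFoundedLT.conditionallyCompleteLinearOrderBot α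

instance wfWithTopCompact (α : Type*) [LinearOrder α] [WellFoundedLT α] :
    CompactSpace (WithTop α) := by
  haveI : BoundedOrder (WithTop α) :=
    { (inferInstance : OrderTop (WithTop α)), (inferInstance : OrderBot (WithTop α)) with }
  exact ⟨by rw [← Icc_bot_top]; exact isCompact_Icc⟩

/-- least upper bounds via `sSup` in a well-founded linear order with a top element. -/
theorem isLUB_sSup_wf {α : Type*} [LinearOrder α] [WellFoundedLT α] [OrderTop α]
    {s : Set α} (hs : s.Nonempty) : IsLUB s (sSup s) :=
  isLUB_csSup hs ⟨⊤, fun _ _ => le_top⟩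

theorem sSup_le_wf {α : Type*} [LinearOrder α] [WellFoundedLT α] [OrderTop α]
    {s : Set α} (hs : s.Nonempty) {u : α} (hu : ∀ x ∈ s, x ≤ u) : sSup s ≤ u :=
  (isLUB_sSup_wf hs).2 hu

theorem le_sSup_wf {α : Type*} [LinearOrder α] [WellFoundedLT α] [OrderTop α]
    {s : Set α} {x : α} (hx : x ∈ s) : x ≤ sSup s :=
  (isLUB_sSup_wf ⟨x, hx⟩).1 hx

end Infra

section OrderTopologyWF

variable {α : Type*} [LinearOrder α] [WellFoundedLT α] [TopologicalSpace α] [OrderTopology α]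

theorem isOpen_Ioc_wf (l x : α) : IsOpen (Ioc l x) := by
  by_cases h : (Ioi x).Nonempty
  · have hx : x < wmin (Ioi x) h := wmin_mem (Ioi x) h
    have : Ioc l x = Ioo l (wmin (Ioi x) h) := by
      ext m
      simp only [mem_Ioc, mem_Ioo]
      refine and_congr_right fun _ => ⟨fun hm => lt_of_le_of_lt hm hx, fun hm => ?_⟩
      by_contra hc
      exact absurd hm (not_lt.2 (wmin_le h (not_le.1 hc)))
    rw [this]; exact isOpen_Ioo
  · have : Ioc l x = Ioi l := by
      ext m
      simp only [mem_Ioc, mem_Ioi, and_iff_left_iff_imp]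
      intro _
      by_contra hc
      exact h ⟨m, not_le.1 hc⟩
    rw [this]; exact isOpen_Ioi

/-- In a well-ordered space, a closure point of `S` not in `S` is the least upper bound of
`S ∩ Iio x`, which is nonempty. -/
theorem mem_closure_wf {S : Set α} {x : α} (hx : x ∈ closure S) (hxS : x ∉ S) :
    (S ∩ Iio x).Nonempty ∧ IsLUB (S ∩ Iio x) x := by
  have hlt : ∃ l, l < x := by
    by_contra h
    push_neg at h
    have hsing : IsOpen {x} := by
      by_cases h2 : (Ioi x).Nonempty
      · have : ({x} : Set α) = Iio (wmin (Ioi x) h2) := by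
          ext m
          simp only [mem_singleton_iff, mem_Iio]
          constructor
          · rintro rfl; exact wmin_mem _ h2
          · intro hm
            rcases lt_trichotomy m x with h3 | h3 | h3
            · exact absurd h3 (not_lt.2 (h m))
            · exact h3
            · exact absurd hm (not_lt.2 (wmin_le h2 h3))
        rw [this]; exact isOpen_Iio
      · have : ({x} : Set α) = univ := by
          ext m
          simp only [mem_singleton_iff, mem_univ, iff_true]
          rcases lt_trichotomy m x with h3 | h3 | h3
          · exact absurd h3 (not_lt.2 (h m))
          · exact h3
          · exact absurd ⟨m, h3⟩ h2
        rw [this]; exact isOpen_univ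
    rcases (mem_closure_iff.1 hx) {x} hsing rfl with ⟨y, hy1, hy2⟩
    rw [mem_singleton_iff] at hy1
    exact hxS (hy1 ▸ hy2)
  have key : ∀ l < x, (S ∩ Ioo l x).Nonempty := by
    intro l hl
    rcases (mem_closure_iff.1 hx) (Ioc l x) (isOpen_Ioc_wf l x) ⟨hl, le_rfl⟩ with ⟨y, hy1, hy2⟩
    refine ⟨y, hy2, hy1.1, lt_of_le_of_ne hy1.2 ?_⟩
    rintro rfl; exact hxS hy2
  obtain ⟨l, hl⟩ := hlt
  obtain ⟨y, hyS, _, hy2⟩ := key l hl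
  refine ⟨⟨y, hyS, hy2⟩, ⟨fun z hz => le_of_lt hz.2, fun u hu => ?_⟩⟩
  by_contra hc
  obtain ⟨z, hzS, hz1, hz2⟩ := key u (not_le.1 hc)
  exact absurd (hu ⟨hzS, hz2⟩) (not_le.2 hz1)

omit [WellFoundedLT α] in
theorem isLUB_mem_of_closed {S F : Set α} {x : α} (hF : IsClosed F) (hSF : S ⊆ F)
    (hS : S.Nonempty) (h : IsLUB S x) : x ∈ F :=
  closure_minimal hSF hF (h.mem_closure hS)

/-- Monotone maps from a well-ordered space which preserve least upper bounds at limit points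
are continuous. -/
theorem monotone_continuous_wf {β : Type*} [LinearOrder β] [TopologicalSpace β] [OrderTopology β]
    {f : α → β} (hf : Monotone f)
    (hlim : ∀ d : α, (Iio d).Nonempty → IsLUB (Iio d) d → IsLUB (f '' Iio d) (f d)) :
    Continuous f := by
  rw [OrderTopology.topology_eq_generate_intervals (α := β)]
  apply continuous_generateFrom_iff.2
  rintro s ⟨a, rfl | rfl⟩
  · -- preimage of Ioi a
    by_cases hU : (f ⁻¹' Ioi a).Nonempty
    · set U := f ⁻¹' Ioi a with hUdef
      have hupper : ∀ u ∈ U, ∀ y, u ≤ y → y ∈ U := fun u hu y hy => lt_of_lt_of_le hu (hf hy)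
      set d := wmin U hU with hd
      have hdU : d ∈ U := wmin_mem U hU
      have hUIci : U = Ici d := by
        ext u
        constructor
        · intro hu; exact wmin_le hU hu
        · intro hu; exact hupper d hdU u hu
      rw [hUIci]
      by_cases hne : (Iio d).Nonempty
      · by_cases hmax : ∃ m, IsGreatest (Iio d) m
        · obtain ⟨m, hm1, hm2⟩ := hmax
          have : Ici d = Ioi m := by
            ext y
            simp only [mem_Ici, mem_Ioi]
            constructor
            · intro hy; exact lt_of_lt_of_le hm1 hy
            · intro hy
              by_contra hc
              exact absurd (hm2 (mem_Iio.2 (not_le.1 hc))) (not_le.2 hy)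
          rw [this]; exact isOpen_Ioi
        · exfalso
          have hlub : IsLUB (Iio d) d := by
            refine ⟨fun z hz => le_of_lt hz, fun u hu => ?_⟩
            by_contra hc
            exact hmax ⟨u, not_le.1 hc, hu⟩
          have h2 := hlim d hne hlub
          have : ∃ y ∈ f '' Iio d, a < y := by
            by_contra hc
            push_neg at hc
            exact absurd (h2.2 fun y hy => hc y hy) (not_le.2 hdU)
          obtain ⟨y, ⟨z, hz, rfl⟩, hy⟩ := this
          exact absurd hz (not_lt.2 (wmin_le hU hy))
      · have : Ici d = univ := eq_univ_of_forall fun y =>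
          not_lt.1 fun hc => hne ⟨y, hc⟩
        rw [this]; exact isOpen_univ
    · rw [not_nonempty_iff_eq_empty.1 hU]; exact isOpen_empty
  · -- preimage of Iio a
    by_cases hU : (f ⁻¹' (Iio a)ᶜ).Nonempty
    · set U := f ⁻¹' (Iio a)ᶜ with hUdef
      have hupper : ∀ u ∈ U, ∀ y, u ≤ y → y ∈ U := by
        intro u hu y hy
        simp only [hUdef, mem_preimage, mem_compl_iff, mem_Iio, not_lt] at hu ⊢
        exact le_trans hu (hf hy)
      set d := wmin U hU with hd
      have hdU : d ∈ U := wmin_mem U hU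
      have hUIci : U = Ici d := by
        ext u
        constructor
        · intro hu; exact wmin_le hU hu
        · intro hu; exact hupper d hdU u hu
      have : f ⁻¹' Iio a = Iio d := by
        have h1 : f ⁻¹' Iio a = Uᶜ := by
          simp only [hUdef, preimage_compl, compl_compl]
        rw [h1, hUIci]
        ext y; simp [not_le]
      rw [this]; exact isOpen_Iio
    · have hall : ∀ y, f y < a := by
        intro y
        by_contra hc
        exact hU ⟨y, by simpa using hc⟩
      have : f ⁻¹' Iio a = univ := eq_univ_of_forall fun y => hall y
      rw [this]; exact isOpen_univ

end OrderTopologyWF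


section AlmostClosedInfra

variable {J : Type v} [LinearOrder J] [WellFoundedLT J]

/-- The image of a subset of `J` in `WithTop J`. -/
def SW (S : Set J) : Set (WithTop J) := (fun j : J => (j : WithTop J)) '' S

theorem SW_nonempty {S : Set J} (h : S.Nonempty) : (SW S).Nonempty :=
  ⟨(h.choose : J), h.choose, h.choose_spec, rfl⟩

theorem coe_lt_top_J (j : J) : (j : WithTop J) < ⊤ := WithTop.coe_lt_top j

theorem almostClosed_nonempty {I : Set J} (hI : AlmostClosed I) : I.Nonempty := by
  obtain ⟨ℓ, h1, _⟩ := hI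
  by_contra h
  rw [not_nonempty_iff_eq_empty.1 h] at h1
  simp only [image_empty, closure_empty, diff_empty] at h1
  exact (h1 ▸ rfl : ℓ ∈ (∅ : Set (WithTop J))) |>.elim

theorem almostClosed_ell_closure {I : Set J} {ℓ : WithTop J}
    (h1 : closure ((fun j : J => (j : WithTop J)) '' I) \ ((fun j : J => (j : WithTop J)) '' I) = {ℓ}) :
    ℓ ∈ closure ((fun j : J => (j : WithTop J)) '' I) ∧
      ℓ ∉ ((fun j : J => (j : WithTop J)) '' I) := by
  have : ℓ ∈ closure ((fun j : J => (j : WithTop J)) '' I) \ ((fun j : J => (j : WithTop J)) '' I) :=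
    h1 ▸ rfl
  exact ⟨this.1, this.2⟩

theorem almostClosed_no_max {I : Set J} (hI : AlmostClosed I) :
    ∀ i ∈ I, ∃ i' ∈ I, i < i' := by
  obtain ⟨ℓ, h1, h2⟩ := hI
  intro i hi
  by_contra h
  push_neg at h
  -- i is a maximum of I
  obtain ⟨hcl, hnotmem⟩ := almostClosed_ell_closure h1
  obtain ⟨_, hlub⟩ := mem_closure_wf hcl hnotmem
  have hub : (i : WithTop J) ∈ upperBounds ((fun j : J => (j : WithTop J)) '' I ∩ Iio ℓ) := by
    rintro x ⟨⟨j, hj, rfl⟩, -⟩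
    exact WithTop.coe_le_coe.2 (h j hj)
  have hle : ℓ ≤ (i : WithTop J) := hlub.2 hub
  have hlt : (i : WithTop J) < ℓ := h2.1 _ ⟨i, hi, rfl⟩
  exact absurd hle (not_le.2 hlt)

/-- `⊤` is in the closure of the image of `I` inside `WithTop ↥I` when `I` is almost closed. -/
theorem top_mem_closure_range {I : Set J} (hI : AlmostClosed I) :
    (⊤ : WithTop ↥I) ∈ closure (range fun i : ↥I => (WithTop.some i : WithTop ↥I)) := by
  obtain ⟨i, hi⟩ := almostClosed_nonempty hI
  have hlub : IsLUB (range fun i : ↥I => (WithTop.some i : WithTop ↥I)) ⊤ := by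
    constructor
    · exact fun x _ => le_top
    · rintro u hu
      rcases eq_or_ne u ⊤ with rfl | hne
      · exact le_rfl
      · exfalso
        obtain ⟨i₀, rfl⟩ : ∃ i₀ : ↥I, WithTop.some i₀ = u := WithTop.ne_top_iff_exists.1 hne
        obtain ⟨i', hi', hlt⟩ := almostClosed_no_max hI i₀ i₀.2
        have := hu (mem_range_self (⟨i', hi'⟩ : ↥I))
        rw [WithTop.coe_le_coe] at this
        exact absurd this (not_le.2 hlt)
  exact hlub.mem_closure ⟨_, mem_range_self ⟨i, hi⟩⟩

/-- The canonical almost closed set spanned by a subset `S ⊆ J` with no greatest element: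
the closure of `S` below its supremum. -/
def Icl (S : Set J) : Set J :=
  {j : J | (j : WithTop J) ∈ closure (SW S) ∧ (j : WithTop J) ≠ sSup (SW S)}

theorem subset_Icl {S : Set J} (hnomax : ∀ s ∈ S, ∃ s' ∈ S, s < s') : S ⊆ Icl S := by
  intro s hs
  refine ⟨subset_closure ⟨s, hs, rfl⟩, ?_⟩
  intro hc
  obtain ⟨s', hs', hlt⟩ := hnomax s hs
  have h1 : (s' : WithTop J) ≤ sSup (SW S) := le_sSup_wf ⟨s', hs', rfl⟩
  rw [← hc, WithTop.coe_le_coe] at h1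
  exact absurd h1 (not_le.2 hlt)

theorem SW_Icl {S : Set J} (hne : S.Nonempty) :
    SW (Icl S) = closure (SW S) \ {sSup (SW S)} := by
  ext x
  constructor
  · rintro ⟨j, ⟨hj1, hj2⟩, rfl⟩
    exact ⟨hj1, hj2⟩
  · rintro ⟨hx1, hx2⟩
    rw [mem_singleton_iff] at hx2
    -- x ≤ sSup (SW S) < ⊤ possible; x ≠ ⊤ since x < sSup or x ≤ sSup with x ≠ sSup
    have hxle : x ≤ sSup (SW S) := by
      rcases em (x ∈ SW S) with h | h
      · exact le_sSup_wf h
      · obtain ⟨hne2, hlub⟩ := mem_closure_wf hx1 h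
        refine hlub.2 fun y hy => le_sSup_wf hy.1
    have hxlt : x < ⊤ := lt_of_lt_of_le (lt_of_le_of_ne hxle hx2) le_top
    obtain ⟨j, rfl⟩ : ∃ j : J, x = (j : WithTop J) := ⟨x.untop hxlt.ne, (WithTop.coe_untop _ _).symm⟩
    exact ⟨j, ⟨hx1, hx2⟩, rfl⟩

theorem almostClosed_Icl {S : Set J} (hne : S.Nonempty)
    (hnomax : ∀ s ∈ S, ∃ s' ∈ S, s < s') : AlmostClosed (Icl S) := by
  refine ⟨sSup (SW S), ?_, ?_⟩
  · have himg : (fun j : J => (j : WithTop J)) '' Icl S = closure (SW S) \ {sSup (SW S)} :=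
      SW_Icl hne
    rw [himg]
    have hSsub : SW S ⊆ closure (SW S) \ {sSup (SW S)} := by
      intro x hx
      refine ⟨subset_closure hx, ?_⟩
      rw [mem_singleton_iff]
      rintro rfl
      obtain ⟨s, hs, hxeq⟩ := hx
      obtain ⟨s', hs', hlt⟩ := hnomax s hs
      have h1 : (s' : WithTop J) ≤ sSup (SW S) := le_sSup_wf ⟨s', hs', rfl⟩
      rw [← hxeq, WithTop.coe_le_coe] at h1
      exact absurd h1 (not_le.2 hlt)
    have hcleq : closure (closure (SW S) \ {sSup (SW S)}) = closure (SW S) := by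
      apply le_antisymm
      · exact closure_minimal diff_subset isClosed_closure
      · exact closure_mono hSsub
    rw [hcleq]
    ext x
    simp only [mem_diff, mem_singleton_iff, not_and, not_not]
    constructor
    · rintro ⟨hx1, hx2⟩
      by_contra hc
      exact hc (hx2 hx1)
    · rintro rfl
      exact ⟨(isLUB_sSup_wf (SW_nonempty hne)).mem_closure (SW_nonempty hne), fun h => rfl⟩
  · constructor
    · rintro x ⟨j, ⟨hj1, hj2⟩, rfl⟩
      have hxle : (j : WithTop J) ≤ sSup (SW S) := by
        rcases em ((j : WithTop J) ∈ SW S) with h | h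
        · exact le_sSup_wf h
        · obtain ⟨hne2, hlub⟩ := mem_closure_wf hj1 h
          exact hlub.2 fun y hy => le_sSup_wf hy.1
      exact lt_of_le_of_ne hxle hj2
    · intro s hs
      apply sSup_le_wf (SW_nonempty hne)
      rintro x ⟨j, hj, rfl⟩
      exact le_of_lt (hs _ ⟨j, subset_Icl hnomax hj, rfl⟩)

end AlmostClosedInfra

set_option linter.unusedSectionVars false

section ChainClosure

variable {γ : Type*} {δ : Type*} [LinearOrder γ] [LinearOrder δ]
  [TopologicalSpace γ] [TopologicalSpace δ] [OrderTopology γ] [OrderTopology δ]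

/-- A coordinatewise strictly increasing chain accumulates at the pair of suprema of its
coordinate projections. -/
theorem chain_pair_mem_closure {V : Set (γ × δ)}
    (hchain : ∀ v ∈ V, ∀ w ∈ V, v = w ∨ (v.1 < w.1 ∧ v.2 < w.2) ∨ (w.1 < v.1 ∧ w.2 < v.2))
    {a : γ} {b : δ} (ha : IsLUB (Prod.fst '' V) a) (hb : IsLUB (Prod.snd '' V) b)
    (hV : V.Nonempty) : (a, b) ∈ closure V := by
  rw [mem_closure_iff]
  intro o ho hmem
  obtain ⟨U₁, U₂, hU₁, hU₂, haU, hbU, hsub⟩ := isOpen_prod_iff.1 ho a b hmem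
  suffices h : ∃ v ∈ V, v.1 ∈ U₁ ∧ v.2 ∈ U₂ by
    obtain ⟨v, hv, h1, h2⟩ := h
    exact ⟨v, hsub (mk_mem_prod h1 h2), hv⟩
  -- helper: find v with v.1 ∈ U₁ and "large" first coordinate
  have key1 : ∃ v ∈ V, v.1 ∈ U₁ ∧ ∀ w ∈ V, v.1 ≤ w.1 → w.1 ∈ U₁ := by
    by_cases hat : ∃ v ∈ V, v.1 = a
    · obtain ⟨v, hv, hveq⟩ := hat
      refine ⟨v, hv, hveq ▸ haU, fun w hw hle => ?_⟩
      have : w.1 ≤ a := ha.1 ⟨w, hw, rfl⟩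
      have : w.1 = a := le_antisymm this (hveq ▸ hle)
      exact this ▸ haU
    · push_neg at hat
      obtain ⟨v₀, hv₀⟩ := hV
      have hlt : v₀.1 < a := lt_of_le_of_ne (ha.1 ⟨v₀, hv₀, rfl⟩) (hat v₀ hv₀)
      obtain ⟨l, hl, hIoc⟩ := exists_Ioc_subset_of_mem_nhds (hU₁.mem_nhds haU) ⟨v₀.1, hlt⟩
      obtain ⟨v, hv, hvl⟩ : ∃ v ∈ V, l < v.1 := by
        by_contra hc
        push_neg at hc
        have : a ≤ l := ha.2 fun x ⟨w, hw, hweq⟩ => hweq ▸ hc w hw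
        exact absurd this (not_le.2 hl)
      refine ⟨v, hv, hIoc ⟨hvl, ha.1 ⟨v, hv, rfl⟩⟩, fun w hw hle => ?_⟩
      exact hIoc ⟨lt_of_lt_of_le hvl hle, ha.1 ⟨w, hw, rfl⟩⟩
  have key2 : ∃ v ∈ V, v.2 ∈ U₂ ∧ ∀ w ∈ V, v.2 ≤ w.2 → w.2 ∈ U₂ := by
    by_cases hat : ∃ v ∈ V, v.2 = b
    · obtain ⟨v, hv, hveq⟩ := hat
      refine ⟨v, hv, hveq ▸ hbU, fun w hw hle => ?_⟩
      have : w.2 ≤ b := hb.1 ⟨w, hw, rfl⟩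
      have : w.2 = b := le_antisymm this (hveq ▸ hle)
      exact this ▸ hbU
    · push_neg at hat
      obtain ⟨v₀, hv₀⟩ := hV
      have hlt : v₀.2 < b := lt_of_le_of_ne (hb.1 ⟨v₀, hv₀, rfl⟩) (hat v₀ hv₀)
      obtain ⟨l, hl, hIoc⟩ := exists_Ioc_subset_of_mem_nhds (hU₂.mem_nhds hbU) ⟨v₀.2, hlt⟩
      obtain ⟨v, hv, hvl⟩ : ∃ v ∈ V, l < v.2 := by
        by_contra hc
        push_neg at hc
        have : b ≤ l := hb.2 fun x ⟨w, hw, hweq⟩ => hweq ▸ hc w hw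
        exact absurd this (not_le.2 hl)
      refine ⟨v, hv, hIoc ⟨hvl, hb.1 ⟨v, hv, rfl⟩⟩, fun w hw hle => ?_⟩
      exact hIoc ⟨lt_of_lt_of_le hvl hle, hb.1 ⟨w, hw, rfl⟩⟩
  obtain ⟨v, hv, hv1, hv1'⟩ := key1
  obtain ⟨w, hw, hw2, hw2'⟩ := key2
  rcases hchain v hv w hw with rfl | ⟨h1, h2⟩ | ⟨h1, h2⟩
  · exact ⟨v, hv, hv1, hw2⟩
  · exact ⟨w, hw, hv1' w hw h1.le, hw2⟩
  · exact ⟨v, hv, hv1, hw2' v hv h2.le⟩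

end ChainClosure

section JClosedBasics

variable {J : Type v} [LinearOrder J] [WellFoundedLT J]

/-- A `J`-closed set in a `J`-convergence space is closed. -/
theorem JClosedSet.isClosed {X : Type u} [TopologicalSpace X] (hX : IsJConvergence J X)
    {C : Set X} (hC : JClosedSet J X C) : IsClosed C := by
  by_contra h
  obtain ⟨I, hI, f, hf, hfi, hft⟩ := hX C h
  exact hft (hC I hI f hf hfi)

/-- Pullback of a `J`-closed set under a continuous map is `J`-closed. -/
theorem JClosedSet.preimage {X : Type*} {Y : Type*} [TopologicalSpace X] [TopologicalSpace Y]
    {C : Set Y} (hC : JClosedSet J Y C) {g : X → Y} (hg : Continuous g) :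
    JClosedSet J X (g ⁻¹' C) := fun I hI f hf hfi =>
  hC I hI (g ∘ f) (hg.comp hf) hfi

/-- Closed sets are `J`-closed. -/
theorem IsClosed.jClosedSet {X : Type u} [TopologicalSpace X] {C : Set X} (hC : IsClosed C) :
    JClosedSet J X C := by
  intro I hI f hf hfi
  have h1 : range (fun i : ↥I => (WithTop.some i : WithTop ↥I)) ⊆ f ⁻¹' C := by
    rintro x ⟨i, rfl⟩; exact hfi i
  have h2 : IsClosed (f ⁻¹' C) := hC.preimage hf
  have := h2.closure_subset_iff.2 h1 (top_mem_closure_range hI)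
  exact this

/-- In a `J`-convergence space, a set all whose probe-preimages are open is open. -/
theorem isOpen_of_probe_preimages {X : Type u} [TopologicalSpace X] (hX : IsJConvergence J X)
    {V : Set X}
    (h : ∀ I : Set J, AlmostClosed I → ∀ t : WithTop ↥I → X, Continuous t → IsOpen (t ⁻¹' V)) :
    IsOpen V := by
  rw [← isClosed_compl_iff]
  refine JClosedSet.isClosed hX ?_
  intro I hI f hf hfi
  intro hft
  have hopen := h I hI f hf
  have htop : (⊤ : WithTop ↥I) ∈ f ⁻¹' V := hft
  rcases mem_closure_iff.1 (top_mem_closure_range hI) _ hopen htop with ⟨y, hy1, i, rfl⟩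
  exact (hfi i) hy1

end JClosedBasics

section Coercions

variable {J : Type v} [LinearOrder J] [WellFoundedLT J]

/-- The canonical embedding `WithTop ↥T → WithTop J`. -/
def eT {T : Set J} : WithTop ↥T → WithTop J := WithTop.map Subtype.val

@[simp] theorem eT_coe {T : Set J} (i : ↥T) : eT (WithTop.some i) = ((i : J) : WithTop J) := rfl

@[simp] theorem eT_top {T : Set J} : eT (⊤ : WithTop ↥T) = ⊤ := rfl

theorem eT_le_iff {T : Set J} {x y : WithTop ↥T} : eT x ≤ eT y ↔ x ≤ y :=
  WithTop.map_le_iff _ Subtype.coe_le_coe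

theorem eT_lt_iff {T : Set J} {x y : WithTop ↥T} : eT x < eT y ↔ x < y := by
  simp only [lt_iff_le_not_ge, eT_le_iff]

theorem eT_injective {T : Set J} : Function.Injective (eT (T := T)) := by
  intro x y h
  exact le_antisymm (eT_le_iff.1 h.le) (eT_le_iff.1 h.ge)

theorem eT_ne_top {T : Set J} {x : WithTop ↥T} (h : x ≠ ⊤) : eT x ≠ ⊤ := by
  obtain ⟨i, rfl⟩ := WithTop.ne_top_iff_exists.1 h
  simp only [eT_coe, ne_eq, WithTop.coe_ne_top, not_false_eq_true]

/-- `x ∈ T` is a limit point of `T` from within iff nontrivially approached. This lemma says: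
if `some x` is an (internal) LUB of its predecessors in `WithTop ↥T`, then below-x elements
of `T` can be strictly interpolated. -/
theorem internal_lub_interpolate {T : Set J} {x : J} (hx : x ∈ T)
    (hlub : IsLUB (Iio (WithTop.some ⟨x, hx⟩ : WithTop ↥T)) (WithTop.some ⟨x, hx⟩)) :
    ∀ y ∈ T, y < x → ∃ y' ∈ T, y < y' ∧ y' < x := by
  intro y hy hyx
  by_contra hc
  push_neg at hc
  have hub : (WithTop.some ⟨y, hy⟩ : WithTop ↥T) ∈
      upperBounds (Iio (WithTop.some ⟨x, hx⟩ : WithTop ↥T)) := by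
    rintro z hz
    rcases eq_or_ne z ⊤ with rfl | hne
    · exact absurd (mem_Iio.1 hz) (not_lt.2 le_top)
    · obtain ⟨i, rfl⟩ := WithTop.ne_top_iff_exists.1 hne
      have h1 : i < (⟨x, hx⟩ : ↥T) := WithTop.coe_lt_coe.1 hz
      have hilt : (i : J) < x := Subtype.coe_lt_coe.2 h1
      rcases le_or_gt (i : J) y with h | h
      · exact WithTop.coe_le_coe.2 h
      · exact absurd hilt (not_lt.2 (hc (i : J) i.2 h))
  have := hlub.2 hub
  rw [WithTop.coe_le_coe, ← Subtype.coe_le_coe] at this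
  exact absurd this (not_le.2 hyx)

end Coercions

section ProbeChain

variable {J : Type v} [LinearOrder J] [WellFoundedLT J] {I₁ I₂ : Set J}

/-- `x` is a limit point of `S` from below. -/
def LimPt {γ : Type*} [Preorder γ] (S : Set γ) (x : γ) : Prop :=
  (S ∩ Iio x).Nonempty ∧ IsLUB (S ∩ Iio x) x

theorem sSup_le_sSup_wf {γ : Type*} [LinearOrder γ] [WellFoundedLT γ] [OrderTop γ]
    {s t : Set γ} (hs : s.Nonempty) (hst : s ⊆ t) : sSup s ≤ sSup t :=
  sSup_le_wf hs fun x hx => le_sSup_wf (hst hx)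

/-- Core probe construction: a coordinatewise strictly increasing chain `W ⊆ C` inside a
`J`-closed set `C`, whose set of first-coordinate values has no internal limit points,
converges (along a suitable probe) to the pair of suprema, which therefore lies in `C`. -/
theorem probe_chain_core {C : Set (WithTop ↥I₁ × WithTop ↥I₂)}
    (hC : JClosedSet J (WithTop ↥I₁ × WithTop ↥I₂) C)
    {W : Set (WithTop ↥I₁ × WithTop ↥I₂)} (hWC : W ⊆ C) (hWne : W.Nonempty)
    (hchain : ∀ v ∈ W, ∀ w ∈ W, v = w ∨ (v.1 < w.1 ∧ v.2 < w.2) ∨ (w.1 < v.1 ∧ w.2 < v.2))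
    (hnomax : ∀ v ∈ W, ∃ w ∈ W, v.1 < w.1 ∧ v.2 < w.2)
    (hselflim : ∀ v ∈ W, ¬ LimPt ((fun u : WithTop ↥I₁ × WithTop ↥I₂ => eT u.1) '' W) (eT v.1))
    (hmin : ∀ p ∈ closure W, p.1 < sSup (Prod.fst '' W) → p ∈ C) :
    (sSup (Prod.fst '' W), sSup (Prod.snd '' W)) ∈ C := by
  classical
  set S : Set (WithTop J) := (fun u : WithTop ↥I₁ × WithTop ↥I₂ => eT u.1) '' W with hSdef
  have hnotopW : ∀ v ∈ W, v.1 ≠ ⊤ := by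
    intro v hv h
    obtain ⟨w, hw, h1, -⟩ := hnomax v hv
    exact absurd (h ▸ h1) (not_lt.2 le_top)
  have hSnotop : ∀ x ∈ S, x ≠ ⊤ := by
    rintro x ⟨v, hv, rfl⟩
    exact eT_ne_top (hnotopW v hv)
  set SJ : Set J := {j : J | (j : WithTop J) ∈ S} with hSJdef
  have hSW : SW SJ = S := by
    ext x
    constructor
    · rintro ⟨j, hj, rfl⟩; exact hj
    · intro hx
      obtain ⟨j, rfl⟩ := WithTop.ne_top_iff_exists.1 (hSnotop x hx)
      exact ⟨j, hx, rfl⟩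
  have hSJne : SJ.Nonempty := by
    obtain ⟨v, hv⟩ := hWne
    obtain ⟨j, hjeq⟩ := WithTop.ne_top_iff_exists.1 (eT_ne_top (hnotopW v hv))
    refine ⟨j, ?_⟩
    show (j : WithTop J) ∈ S
    rw [hjeq]; exact ⟨v, hv, rfl⟩
  have hSJnomax : ∀ s ∈ SJ, ∃ s' ∈ SJ, s < s' := by
    intro s hs
    obtain ⟨v, hv, hveq⟩ := hs
    obtain ⟨w, hw, h1, -⟩ := hnomax v hv
    obtain ⟨j, hjeq⟩ := WithTop.ne_top_iff_exists.1 (eT_ne_top (hnotopW w hw))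
    refine ⟨j, by show (j : WithTop J) ∈ S; rw [hjeq]; exact ⟨w, hw, rfl⟩, ?_⟩
    rw [← WithTop.coe_lt_coe, hjeq, ← hveq]
    exact eT_lt_iff.2 h1
  have hAC : AlmostClosed (Icl SJ) := almostClosed_Icl hSJne hSJnomax
  have hmemIcl : ∀ j ∈ SJ, j ∈ Icl SJ := fun j hj => subset_Icl hSJnomax hj
  set ℓ : WithTop J := sSup (SW SJ) with hldef
  have hltℓ : ∀ j ∈ SJ, (j : WithTop J) < ℓ := by
    intro j hj
    obtain ⟨s', hs', hlt⟩ := hSJnomax j hj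
    exact lt_of_lt_of_le (WithTop.coe_lt_coe.2 hlt) (le_sSup_wf ⟨s', hs', rfl⟩)
  set Tz : WithTop ↥(Icl SJ) → Set (WithTop ↥I₁ × WithTop ↥I₂) :=
    fun z => {v ∈ W | eT v.1 ≤ eT z} with hTzdef
  set g : WithTop ↥(Icl SJ) → WithTop ↥I₁ × WithTop ↥I₂ :=
    fun z => (sSup (Prod.fst '' Tz z), sSup (Prod.snd '' Tz z)) with hgdef
  have hTztop : Tz ⊤ = W := by
    ext v; simp only [hTzdef, mem_setOf_eq, eT_top, le_top, and_true, mem_sep_iff]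
  have hTzne : ∀ z : WithTop ↥(Icl SJ), (Tz z).Nonempty := by
    intro z
    rcases eq_or_ne z ⊤ with rfl | hz
    · rw [hTztop]; exact hWne
    · obtain ⟨⟨x, hx⟩, rfl⟩ := WithTop.ne_top_iff_exists.1 hz
      have hx1 : (x : WithTop J) ∈ closure S := by
        have := hx.1; rwa [hSW] at this
      rcases em ((x : WithTop J) ∈ S) with h | h
      · obtain ⟨v, hv, hveq⟩ := h
        have hveq' : eT v.1 = (x : WithTop J) := hveq
        exact ⟨v, hv, le_of_eq hveq'⟩
      · obtain ⟨⟨s, hs1, hs2⟩, -⟩ := mem_closure_wf hx1 h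
        obtain ⟨v, hv, hveq⟩ := hs1
        have hveq' : eT v.1 = s := hveq
        exact ⟨v, hv, le_of_lt (lt_of_eq_of_lt hveq' hs2)⟩
  have hTzmono : ∀ {z z' : WithTop ↥(Icl SJ)}, z ≤ z' → Tz z ⊆ Tz z' := by
    intro z z' hzz v hv
    exact ⟨hv.1, le_trans hv.2 (eT_le_iff.2 hzz)⟩
  have hgenuine : ∀ (x : J) (hx : x ∈ Icl SJ) (v : WithTop ↥I₁ × WithTop ↥I₂), v ∈ W →
      eT v.1 = (x : WithTop J) → g (WithTop.some ⟨x, hx⟩) = v := by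
    intro x hx v hv hveq
    have hgt : ∀ w ∈ Tz (WithTop.some ⟨x, hx⟩), w.1 ≤ v.1 ∧ w.2 ≤ v.2 := by
      rintro w ⟨hw, hwle⟩
      have h1 : w.1 ≤ v.1 := by
        rw [← eT_le_iff, hveq]
        exact hwle
      rcases hchain w hw v hv with rfl | ⟨ha, hb⟩ | ⟨ha, hb⟩
      · exact ⟨le_rfl, le_rfl⟩
      · exact ⟨ha.le, hb.le⟩
      · exact absurd h1 (not_le.2 ha)
    have hvmem : v ∈ Tz (WithTop.some ⟨x, hx⟩) := ⟨hv, le_of_eq hveq⟩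
    have h1 : sSup (Prod.fst '' Tz (WithTop.some ⟨x, hx⟩)) = v.1 :=
      le_antisymm (sSup_le_wf ((hTzne _).image _) (by rintro y ⟨w, hw, rfl⟩; exact (hgt w hw).1))
        (le_sSup_wf ⟨v, hvmem, rfl⟩)
    have h2 : sSup (Prod.snd '' Tz (WithTop.some ⟨x, hx⟩)) = v.2 :=
      le_antisymm (sSup_le_wf ((hTzne _).image _) (by rintro y ⟨w, hw, rfl⟩; exact (hgt w hw).2))
        (le_sSup_wf ⟨v, hvmem, rfl⟩)
    rw [hgdef]
    exact Prod.ext h1 h2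
  have hvals : ∀ i : ↥(Icl SJ), g (WithTop.some i) ∈ C := by
    rintro ⟨x, hx⟩
    rcases em (x ∈ SJ) with h | h
    · obtain ⟨v, hv, hveq⟩ := h
      rw [hgenuine x hx v hv hveq]
      exact hWC hv
    · have hx1 : (x : WithTop J) ∈ closure S := by
        have := hx.1; rwa [hSW] at this
      have hchainTz : ∀ v ∈ Tz (WithTop.some ⟨x, hx⟩), ∀ w ∈ Tz (WithTop.some ⟨x, hx⟩),
          v = w ∨ (v.1 < w.1 ∧ v.2 < w.2) ∨ (w.1 < v.1 ∧ w.2 < v.2) :=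
        fun v hv w hw => hchain v hv.1 w hw.1
      have hcl : g (WithTop.some ⟨x, hx⟩) ∈ closure W := by
        have h1 : g (WithTop.some ⟨x, hx⟩) ∈ closure (Tz (WithTop.some ⟨x, hx⟩)) :=
          chain_pair_mem_closure hchainTz
            (isLUB_sSup_wf ((hTzne _).image _)) (isLUB_sSup_wf ((hTzne _).image _)) (hTzne _)
        exact closure_mono (fun v hv => hv.1) h1
      have hxltℓ : (x : WithTop J) < ℓ := by
        have hle : (x : WithTop J) ≤ ℓ := by
          rcases em ((x : WithTop J) ∈ SW SJ) with h2 | h2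
          · exact le_sSup_wf h2
          · rw [hSW] at h2
            obtain ⟨-, hlub⟩ := mem_closure_wf hx1 h2
            exact hlub.2 fun y hy => le_sSup_wf (by rw [hSW]; exact hy.1)
        exact lt_of_le_of_ne hle hx.2
      obtain ⟨s, hsS, hxs⟩ : ∃ s ∈ S, (x : WithTop J) < s := by
        by_contra hc
        push_neg at hc
        have : ℓ ≤ (x : WithTop J) := sSup_le_wf (SW_nonempty hSJne)
          (by rintro y hy; exact hc y (by rwa [← hSW]))
        exact absurd this (not_le.2 hxltℓ)
      obtain ⟨w, hw, hweq⟩ := hsS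
      have hfstlt : (g (WithTop.some ⟨x, hx⟩)).1 < sSup (Prod.fst '' W) := by
        have h1 : (g (WithTop.some ⟨x, hx⟩)).1 ≤ w.1 := by
          apply sSup_le_wf ((hTzne _).image _)
          rintro y ⟨u, hu, rfl⟩
          have hweq' : eT w.1 = s := hweq
          have : eT u.1 < eT w.1 := by
            rw [hweq']
            exact lt_of_le_of_lt hu.2 hxs
          exact (eT_lt_iff.1 this).le
        obtain ⟨w', hw', hlt', -⟩ := hnomax w hw
        exact lt_of_le_of_lt h1 (lt_of_lt_of_le hlt' (le_sSup_wf ⟨w', hw', rfl⟩))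
      exact hmin _ hcl hfstlt
  -- translation of internal limits; used for continuity
  have hlimtrans : ∀ (d : WithTop ↥(Icl SJ)), (Iio d).Nonempty → IsLUB (Iio d) d →
      ∀ v ∈ Tz d, ∃ z' < d, v ∈ Tz z' := by
    intro d hdne hdlub v hv
    obtain ⟨j, hjeq⟩ := WithTop.ne_top_iff_exists.1 (eT_ne_top (hnotopW v hv.1))
    have hjSJ : j ∈ SJ := by
      show (j : WithTop J) ∈ S
      rw [hjeq]; exact ⟨v, hv.1, rfl⟩
    have hjIcl : j ∈ Icl SJ := hmemIcl j hjSJ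
    refine ⟨WithTop.some ⟨j, hjIcl⟩, ?_, ⟨hv.1, le_of_eq hjeq.symm⟩⟩
    rcases eq_or_ne d ⊤ with rfl | hd
    · exact WithTop.coe_lt_top _
    · obtain ⟨⟨x, hx⟩, rfl⟩ := WithTop.ne_top_iff_exists.1 hd
      have hjx : (j : WithTop J) ≤ (x : WithTop J) := by
        rw [hjeq]; exact hv.2
      rcases lt_or_eq_of_le hjx with hlt | heq
      · exact WithTop.coe_lt_coe.2 (Subtype.mk_lt_mk.2 (WithTop.coe_lt_coe.1 hlt))
      · exfalso
        have hxSJ : x ∈ SJ := by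
          show (x : WithTop J) ∈ S
          rw [← heq, hjeq]; exact ⟨v, hv.1, rfl⟩
        obtain ⟨vx, hvx, hvxeq⟩ : ∃ vx ∈ W, eT vx.1 = (x : WithTop J) := id hxSJ
        apply hselflim vx hvx
        show LimPt S (eT vx.1)
        rw [hvxeq]
        have hinterp := internal_lub_interpolate hx hdlub
        have step : ∀ y ∈ Icl SJ, y < x → ∃ s ∈ S, (y : WithTop J) < s ∧ s < (x : WithTop J) := by
          intro y hy hyx
          obtain ⟨y', hy', hyy', hy'x⟩ := hinterp y hy hyx
          have hy'cl : (y' : WithTop J) ∈ closure S := by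
            have := hy'.1; rwa [hSW] at this
          rcases em ((y' : WithTop J) ∈ S) with h2 | h2
          · exact ⟨y', h2, WithTop.coe_lt_coe.2 hyy', WithTop.coe_lt_coe.2 hy'x⟩
          · obtain ⟨hne2, hlub2⟩ := mem_closure_wf hy'cl h2
            obtain ⟨s, hs1, hs2⟩ : ∃ s ∈ S ∩ Iio (y' : WithTop J), (y : WithTop J) < s := by
              by_contra hc
              push_neg at hc
              have : (y' : WithTop J) ≤ (y : WithTop J) :=
                hlub2.2 fun t ht => not_lt.1 fun hlt => absurd hlt (not_lt.2 (hc t ht))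
              exact absurd this (not_le.2 (WithTop.coe_lt_coe.2 hyy'))
            exact ⟨s, hs1.1, hs2, lt_trans hs1.2 (WithTop.coe_lt_coe.2 hy'x)⟩
        obtain ⟨z₀, hz₀⟩ := hdne
        have hz₀ne : z₀ ≠ ⊤ := by
          rintro rfl
          exact absurd (mem_Iio.1 hz₀) (not_lt.2 le_top)
        obtain ⟨⟨y₀, hy₀⟩, rfl⟩ := WithTop.ne_top_iff_exists.1 hz₀ne
        have hy₀x : y₀ < x := by
          have := mem_Iio.1 hz₀
          exact Subtype.mk_lt_mk.1 (WithTop.coe_lt_coe.1 this)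
        obtain ⟨s₀, hs₀S, hs₀1, hs₀2⟩ := step y₀ hy₀ hy₀x
        have hSne : (S ∩ Iio (x : WithTop J)).Nonempty := ⟨s₀, hs₀S, hs₀2⟩
        refine ⟨hSne, ⟨fun t ht => ht.2.le, ?_⟩⟩
        intro u hu
        by_contra hc
        have hult : u < (x : WithTop J) := not_le.1 hc
        set ystar : WithTop J := sSup (S ∩ Iio (x : WithTop J)) with hystar
        have hystar_le : ystar ≤ u := sSup_le_wf hSne fun t ht => hu ht
        have hystar_lt : ystar < (x : WithTop J) := lt_of_le_of_lt hystar_le hult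
        have hystar_cl : ystar ∈ closure S :=
          closure_mono inter_subset_left ((isLUB_sSup_wf hSne).mem_closure hSne)
        obtain ⟨js, hjs⟩ := WithTop.ne_top_iff_exists.1 (ne_top_of_lt hystar_lt)
        have hjsIcl : js ∈ Icl SJ := by
          refine ⟨by rw [hSW, hjs]; exact hystar_cl, ?_⟩
          rw [hjs]
          exact ne_of_lt (lt_trans hystar_lt (hltℓ x hxSJ))
        have hjsx : js < x := by
          rw [← WithTop.coe_lt_coe, hjs]
          exact hystar_lt
        obtain ⟨s, hsS, hs1, hs2⟩ := step js hjsIcl hjsx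
        have : s ≤ ystar := le_sSup_wf ⟨hsS, hs2⟩
        rw [← hjs] at this
        exact absurd this (not_le.2 hs1)
  -- continuity of g
  have hc1 : Continuous fun z => (g z).1 := by
    apply monotone_continuous_wf
    · intro z z' h
      exact sSup_le_sSup_wf ((hTzne z).image _) (image_mono (hTzmono h))
    · intro d hdne hdlub
      constructor
      · rintro y ⟨z, hz, rfl⟩
        exact sSup_le_sSup_wf ((hTzne z).image _) (image_mono (hTzmono (le_of_lt hz)))
      · intro u hu
        apply sSup_le_wf ((hTzne d).image _)
        rintro y ⟨w, hw, rfl⟩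
        obtain ⟨z', hz', hwz'⟩ := hlimtrans d hdne hdlub w hw
        have h1 : w.1 ≤ sSup (Prod.fst '' Tz z') := le_sSup_wf ⟨w, hwz', rfl⟩
        have h2 : sSup (Prod.fst '' Tz z') ≤ u := hu ⟨z', hz', rfl⟩
        exact le_trans h1 h2
  have hc2 : Continuous fun z => (g z).2 := by
    apply monotone_continuous_wf
    · intro z z' h
      exact sSup_le_sSup_wf ((hTzne z).image _) (image_mono (hTzmono h))
    · intro d hdne hdlub
      constructor
      · rintro y ⟨z, hz, rfl⟩
        exact sSup_le_sSup_wf ((hTzne z).image _) (image_mono (hTzmono (le_of_lt hz)))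
      · intro u hu
        apply sSup_le_wf ((hTzne d).image _)
        rintro y ⟨w, hw, rfl⟩
        obtain ⟨z', hz', hwz'⟩ := hlimtrans d hdne hdlub w hw
        have h1 : w.2 ≤ sSup (Prod.snd '' Tz z') := le_sSup_wf ⟨w, hwz', rfl⟩
        have h2 : sSup (Prod.snd '' Tz z') ≤ u := hu ⟨z', hz', rfl⟩
        exact le_trans h1 h2
  have hgcont : Continuous g := by
    have : g = fun z => ((g z).1, (g z).2) := by
      funext z; rfl
    rw [this]
    exact hc1.prodMk hc2
  have htop := hC (Icl SJ) hAC g hgcont hvals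
  have hgtop : g ⊤ = (sSup (Prod.fst '' W), sSup (Prod.snd '' W)) := by
    rw [hgdef]
    simp only [hTztop]
  rwa [hgtop] at htop

end ProbeChain

section ProbeChainFull

variable {J : Type v} [LinearOrder J] [WellFoundedLT J] {I₁ I₂ : Set J}

/-- The probe construction for an arbitrary coordinatewise strictly increasing chain `V ⊆ C`
inside a `J`-closed set `C` (with a minimality oracle): the pair of suprema lies in `C`. -/
theorem probe_chain {C : Set (WithTop ↥I₁ × WithTop ↥I₂)}
    (hC : JClosedSet J (WithTop ↥I₁ × WithTop ↥I₂) C)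
    {V : Set (WithTop ↥I₁ × WithTop ↥I₂)} (hVC : V ⊆ C) (hV : V.Nonempty)
    (hchain : ∀ v ∈ V, ∀ w ∈ V, v = w ∨ (v.1 < w.1 ∧ v.2 < w.2) ∨ (w.1 < v.1 ∧ w.2 < v.2))
    (hnomax : ∀ v ∈ V, ∃ w ∈ V, v.1 < w.1 ∧ v.2 < w.2)
    (hmin : ∀ p ∈ closure V, p.1 < sSup (Prod.fst '' V) → p ∈ C) :
    (sSup (Prod.fst '' V), sSup (Prod.snd '' V)) ∈ C := by
  classical
  set Slim : Set (WithTop J) := (fun u : WithTop ↥I₁ × WithTop ↥I₂ => eT u.1) '' V with hSlim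
  set W : Set (WithTop ↥I₁ × WithTop ↥I₂) := {v ∈ V | ¬ LimPt Slim (eT v.1)} with hWdef
  have hWV : W ⊆ V := fun v hv => hv.1
  -- cofinality of the pruned chain
  have hcof : ∀ v ∈ V, ∃ w ∈ W, v.1 ≤ w.1 ∧ v.2 ≤ w.2 := by
    intro v hv
    have hA : (Slim ∩ Ioi (eT v.1)).Nonempty := by
      obtain ⟨w, hw, h1, -⟩ := hnomax v hv
      exact ⟨eT w.1, ⟨w, hw, rfl⟩, eT_lt_iff.2 h1⟩
    set y := wmin _ hA with hy
    have hymem := wmin_mem _ hA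
    have hynl : ¬ LimPt Slim y := by
      rintro ⟨hne, hlub⟩
      obtain ⟨t, htS, htv⟩ : ∃ t ∈ Slim ∩ Iio y, eT v.1 < t := by
        by_contra hc
        push_neg at hc
        have : y ≤ eT v.1 := hlub.2 fun t ht => hc t ht
        exact absurd this (not_le.2 hymem.2)
      exact absurd (wmin_le hA ⟨htS.1, htv⟩) (not_le.2 htS.2)
    obtain ⟨wp, hwp, hweq⟩ : ∃ wp ∈ V, eT wp.1 = y := hymem.1
    have hwW : wp ∈ W := ⟨hwp, by rw [show eT wp.1 = y from hweq]; exact hynl⟩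
    have h1 : v.1 < wp.1 := by
      rw [← eT_lt_iff, show eT wp.1 = y from hweq]
      exact hymem.2
    rcases hchain v hv wp hwp with heqvw | ⟨ha, hb⟩ | ⟨ha, hb⟩
    · exact ⟨wp, hwW, le_of_eq (congrArg Prod.fst heqvw), le_of_eq (congrArg Prod.snd heqvw)⟩
    · exact ⟨wp, hwW, ha.le, hb.le⟩
    · exact absurd h1 (not_lt.2 ha.le)
  have hWne : W.Nonempty := by
    obtain ⟨v, hv⟩ := hV
    obtain ⟨w, hw, -⟩ := hcof v hv
    exact ⟨w, hw⟩
  have hchainW : ∀ v ∈ W, ∀ w ∈ W, v = w ∨ (v.1 < w.1 ∧ v.2 < w.2) ∨ (w.1 < v.1 ∧ w.2 < v.2) :=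
    fun v hv w hw => hchain v (hWV hv) w (hWV hw)
  have hnomaxW : ∀ v ∈ W, ∃ w ∈ W, v.1 < w.1 ∧ v.2 < w.2 := by
    intro v hv
    obtain ⟨w, hw, h1, h2⟩ := hnomax v (hWV hv)
    obtain ⟨w', hw', h3, h4⟩ := hcof w hw
    exact ⟨w', hw', lt_of_lt_of_le h1 h3, lt_of_lt_of_le h2 h4⟩
  -- suprema agree
  have hfst : sSup (Prod.fst '' V) = sSup (Prod.fst '' W) := by
    refine (isLUB_sSup_wf (hV.image _)).unique ⟨?_, ?_⟩
    · rintro t ⟨v, hv, rfl⟩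
      obtain ⟨w, hw, h1, -⟩ := hcof v hv
      exact le_trans h1 (le_sSup_wf ⟨w, hw, rfl⟩)
    · intro u hu
      exact sSup_le_wf (hWne.image _) fun t ⟨w, hw, hteq⟩ => hu ⟨w, hWV hw, hteq⟩
  have hsnd : sSup (Prod.snd '' V) = sSup (Prod.snd '' W) := by
    refine (isLUB_sSup_wf (hV.image _)).unique ⟨?_, ?_⟩
    · rintro t ⟨v, hv, rfl⟩
      obtain ⟨w, hw, -, h2⟩ := hcof v hv
      exact le_trans h2 (le_sSup_wf ⟨w, hw, rfl⟩)
    · intro u hu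
      exact sSup_le_wf (hWne.image _) fun t ⟨w, hw, hteq⟩ => hu ⟨w, hWV hw, hteq⟩
  have hselflimW : ∀ v ∈ W, ¬ LimPt ((fun u : WithTop ↥I₁ × WithTop ↥I₂ => eT u.1) '' W)
      (eT v.1) := by
    rintro v hv ⟨hne, hlub⟩
    apply hv.2
    refine ⟨hne.mono (inter_subset_inter (image_mono hWV) le_rfl), ?_, ?_⟩
    · rintro t ⟨⟨w, hw, rfl⟩, ht2⟩
      exact ht2.le
    · intro u hu
      exact hlub.2 fun t ht =>
        hu ⟨(image_mono (f := fun u : WithTop ↥I₁ × WithTop ↥I₂ => eT u.1) hWV) ht.1, ht.2⟩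
  have hminW : ∀ p ∈ closure W, p.1 < sSup (Prod.fst '' W) → p ∈ C := by
    intro p hp hlt
    exact hmin p (closure_mono hWV hp) (hfst ▸ hlt)
  rw [hfst, hsnd]
  exact probe_chain_core hC (fun v hv => hVC (hWV hv)) hWne hchainW hnomaxW hselflimW hminW

end ProbeChainFull

section OneDim

variable {J : Type v} [LinearOrder J] [WellFoundedLT J]

theorem isOpen_singleton_of_bot {α : Type*} [LinearOrder α] [WellFoundedLT α]
    [TopologicalSpace α] [OrderTopology α] {x : α} (h : Iio x = ∅) : IsOpen {x} := by
  by_cases h2 : (Ioi x).Nonempty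
  · have : ({x} : Set α) = Iio (wmin (Ioi x) h2) := by
      ext m
      simp only [mem_singleton_iff, mem_Iio]
      constructor
      · rintro rfl; exact wmin_mem _ h2
      · intro hm
        rcases lt_trichotomy m x with h3 | h3 | h3
        · exact absurd (mem_Iio.2 h3) (h ▸ notMem_empty m)
        · exact h3
        · exact absurd hm (not_lt.2 (wmin_le h2 h3))
    rw [this]; exact isOpen_Iio
  · have : ({x} : Set α) = univ := by
      ext m
      simp only [mem_singleton_iff, mem_univ, iff_true]
      rcases lt_trichotomy m x with h3 | h3 | h3
      · exact absurd (mem_Iio.2 h3) (h ▸ notMem_empty m)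
      · exact h3
      · exact absurd ⟨m, h3⟩ h2
    rw [this]; exact isOpen_univ

theorem mem_of_cofinal_closed {α : Type*} [LinearOrder α] [WellFoundedLT α]
    [TopologicalSpace α] [OrderTopology α] {F : Set α} (hF : IsClosed F) {x : α}
    (hcof : ∀ β < x, ∃ t ∈ F, β < t ∧ t < x) {β₀ : α} (hβ₀ : β₀ < x) : x ∈ F := by
  obtain ⟨t₀, ht₀F, ht₀1, ht₀2⟩ := hcof β₀ hβ₀
  have hlub : IsLUB (F ∩ Iio x) x := by
    constructor
    · exact fun t ht => ht.2.le
    · intro u hu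
      by_contra hc
      obtain ⟨t, htF, ht1, ht2⟩ := hcof u (not_le.1 hc)
      exact absurd (hu ⟨htF, ht2⟩) (not_le.2 ht1)
  have hmem : t₀ ∈ F ∩ Iio x := ⟨ht₀F, ht₀2⟩
  exact isLUB_mem_of_closed hF inter_subset_left ⟨t₀, hmem⟩ hlub

/-- A `J`-closed subset of a basic compactum `WithTop ↥I` is closed. -/
theorem jclosed_isClosed_one {I : Set J} {C : Set (WithTop ↥I)}
    (hC : JClosedSet J (WithTop ↥I) C) : IsClosed C := by
  by_contra hnc
  have hne : (closure C \ C).Nonempty := by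
    by_contra h
    rw [not_nonempty_iff_eq_empty, diff_eq_empty] at h
    exact hnc (isClosed_of_closure_subset h)
  set a₀ : WithTop ↥I := wmin _ hne with ha₀
  have ha₀mem : a₀ ∈ closure C \ C := wmin_mem _ hne
  obtain ⟨hA'ne, hA'lub⟩ := mem_closure_wf ha₀mem.1 ha₀mem.2
  set A' : Set (WithTop ↥I) := C ∩ Iio a₀ with hA'
  -- the diagonal chain
  set C' : Set (WithTop ↥I × WithTop ↥I) := Prod.fst ⁻¹' C with hC'
  have hC'j : JClosedSet J (WithTop ↥I × WithTop ↥I) C' :=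
    JClosedSet.preimage hC continuous_fst
  set V : Set (WithTop ↥I × WithTop ↥I) := (fun a => (a, a)) '' A' with hV
  have hVC' : V ⊆ C' := by rintro p ⟨a, ha, rfl⟩; exact ha.1
  have hVne : V.Nonempty := hA'ne.image _
  have hchain : ∀ v ∈ V, ∀ w ∈ V, v = w ∨ (v.1 < w.1 ∧ v.2 < w.2) ∨ (w.1 < v.1 ∧ w.2 < v.2) := by
    rintro v ⟨a, ha, rfl⟩ w ⟨b, hb, rfl⟩
    rcases lt_trichotomy a b with h | h | h
    · exact Or.inr (Or.inl ⟨h, h⟩)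
    · exact Or.inl (by rw [h])
    · exact Or.inr (Or.inr ⟨h, h⟩)
  have hnomaxA : ∀ a ∈ A', ∃ b ∈ A', a < b := by
    intro a ha
    by_contra hc
    push_neg at hc
    have : a₀ ≤ a := hA'lub.2 fun t ht => hc t ht
    exact absurd ha.2 (not_lt.2 this)
  have hnomax : ∀ v ∈ V, ∃ w ∈ V, v.1 < w.1 ∧ v.2 < w.2 := by
    rintro v ⟨a, ha, rfl⟩
    obtain ⟨b, hb, hab⟩ := hnomaxA a ha
    exact ⟨(b, b), ⟨b, hb, rfl⟩, hab, hab⟩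
  have hfstV : Prod.fst '' V = A' := by
    rw [hV, image_image]
    simp
  have hsndV : Prod.snd '' V = A' := by
    rw [hV, image_image]
    simp
  have hsupA' : sSup A' = a₀ := (isLUB_sSup_wf hA'ne).unique hA'lub
  have hmin : ∀ p ∈ closure V, p.1 < sSup (Prod.fst '' V) → p ∈ C' := by
    intro p hp hlt
    rw [hfstV, hsupA'] at hlt
    have h1 : p.1 ∈ closure A' := by
      have := image_closure_subset_closure_image (f := Prod.fst) continuous_fst
        (mem_image_of_mem _ hp)
      rwa [hfstV] at this
    have h2 : p.1 ∈ closure C := closure_mono inter_subset_left h1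
    by_contra h3
    have : p.1 ∈ closure C \ C := ⟨h2, h3⟩
    exact absurd (wmin_le hne this) (not_le.2 hlt)
  have := probe_chain hC'j hVC' hVne hchain hnomax hmin
  rw [hfstV, hsndV, hsupA'] at this
  exact ha₀mem.2 this

end OneDim

section TwoDim

variable {J : Type v} [LinearOrder J] [WellFoundedLT J]

/-- A `J`-closed subset of a product of two basic compacta is closed. -/
theorem jclosed_isClosed_prod {I₁ I₂ : Set J} {C : Set (WithTop ↥I₁ × WithTop ↥I₂)}
    (hC : JClosedSet J (WithTop ↥I₁ × WithTop ↥I₂) C) : IsClosed C := by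
  by_contra hnc
  have hne : (closure C \ C).Nonempty := by
    by_contra h
    rw [not_nonempty_iff_eq_empty, diff_eq_empty] at h
    exact hnc (isClosed_of_closure_subset h)
  have hfne : (Prod.fst '' (closure C \ C)).Nonempty := hne.image _
  set a₀ : WithTop ↥I₁ := wmin _ hfne with ha₀
  have hbne : {b : WithTop ↥I₂ | (a₀, b) ∈ closure C \ C}.Nonempty := by
    obtain ⟨p, hp, hpeq⟩ := wmin_mem _ hfne
    refine ⟨p.2, ?_⟩
    show (a₀, p.2) ∈ closure C \ C
    rw [ha₀, ← hpeq, Prod.mk.eta]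
    exact hp
  set b₀ : WithTop ↥I₂ := wmin _ hbne with hb₀
  have hbad : (a₀, b₀) ∈ closure C \ C := wmin_mem _ hbne
  have hm1 : ∀ p : WithTop ↥I₁ × WithTop ↥I₂, p ∈ closure C → p.1 < a₀ → p ∈ C := by
    intro p h1 h2
    by_contra h3
    exact absurd (wmin_le hfne ⟨p, ⟨h1, h3⟩, rfl⟩) (not_le.2 h2)
  set SA : Set (WithTop ↥I₂) := {b | (a₀, b) ∈ C} with hSA
  have hSAc : IsClosed SA :=
    jclosed_isClosed_one (JClosedSet.preimage hC (Continuous.prodMk_right a₀))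
  set SB : Set (WithTop ↥I₁) := {a | (a, b₀) ∈ C} with hSB
  have hSBc : IsClosed SB :=
    jclosed_isClosed_one (JClosedSet.preimage hC (continuous_id.prodMk continuous_const))
  have hmeets : ∀ U : Set (WithTop ↥I₁ × WithTop ↥I₂), IsOpen U → (a₀, b₀) ∈ U →
      ∃ p ∈ C, p ∈ U := by
    intro U hU hmem
    obtain ⟨p, hp1, hp2⟩ := mem_closure_iff.1 hbad.1 U hU hmem
    exact ⟨p, hp2, hp1⟩
  by_cases hIa : (Iio a₀).Nonempty
  · by_cases hIb : (Iio b₀).Nonempty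
    · -- main case: both coordinates are approached from below
      obtain ⟨α₀, hα₀⟩ := hIa
      obtain ⟨β₀, hβ₀⟩ := hIb
      by_cases hcofA : ∀ β < b₀, ∃ t ∈ SA, β < t ∧ t < b₀
      · exact hbad.2 (mem_of_cofinal_closed hSAc hcofA hβ₀)
      by_cases hcofB : ∀ α < a₀, ∃ t ∈ SB, α < t ∧ t < a₀
      · exact hbad.2 (mem_of_cofinal_closed hSBc hcofB hα₀)
      push_neg at hcofA hcofB
      obtain ⟨βs, hβslt, hβs⟩ := hcofA
      obtain ⟨αs, hαslt, hαs⟩ := hcofB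
      -- interior meeting points
      have hint : ∀ α β, αs ≤ α → α < a₀ → βs ≤ β → β < b₀ →
          ∃ p ∈ C, (α < p.1 ∧ p.1 < a₀) ∧ (β < p.2 ∧ p.2 < b₀) := by
        intro α β hα1 hα2 hβ1 hβ2
        obtain ⟨p, hpC, hpU⟩ := hmeets (Ioc α a₀ ×ˢ Ioc β b₀)
          ((isOpen_Ioc_wf _ _).prod (isOpen_Ioc_wf _ _)) ⟨⟨hα2, le_rfl⟩, hβ2, le_rfl⟩
        obtain ⟨⟨hp1, hp2⟩, hp3, hp4⟩ := hpU
        have hfst : p.1 < a₀ := by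
          rcases lt_or_eq_of_le hp2 with h | h
          · exact h
          · exfalso
            have hpSA : p.2 ∈ SA := by
              show (a₀, p.2) ∈ C
              rw [← h, Prod.mk.eta]
              exact hpC
            rcases lt_or_eq_of_le hp4 with h2 | h2
            · exact absurd (hβs p.2 hpSA (lt_of_le_of_lt hβ1 hp3)) (not_le.2 h2)
            · apply hbad.2
              rw [← h, ← h2, Prod.mk.eta]
              exact hpC
        have hsnd : p.2 < b₀ := by
          rcases lt_or_eq_of_le hp4 with h | h
          · exact h
          · exfalso
            have hpSB : p.1 ∈ SB := by
              show (p.1, b₀) ∈ C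
              rw [← h, Prod.mk.eta]
              exact hpC
            exact absurd (hαs p.1 hpSB (lt_of_le_of_lt hα1 hp1)) (not_le.2 hfst)
        exact ⟨p, hpC, ⟨hp1, hfst⟩, hp3, hsnd⟩
      -- Zorn's lemma: a maximal coordinatewise strictly increasing chain in the open box
      set box : Set (WithTop ↥I₁ × WithTop ↥I₂) :=
        {p | p ∈ C ∧ αs < p.1 ∧ p.1 < a₀ ∧ βs < p.2 ∧ p.2 < b₀} with hbox
      set Chains : Set (Set (WithTop ↥I₁ × WithTop ↥I₂)) :=
        {V | V ⊆ box ∧ ∀ v ∈ V, ∀ w ∈ V,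
          v = w ∨ (v.1 < w.1 ∧ v.2 < w.2) ∨ (w.1 < v.1 ∧ w.2 < v.2)} with hChains
      obtain ⟨V, hVmax⟩ := zorn_subset Chains (by
        intro c hc hchainc
        refine ⟨⋃₀ c, ⟨?_, ?_⟩, fun s hs => subset_sUnion_of_mem hs⟩
        · rintro p ⟨s, hs, hps⟩
          exact (hc hs).1 hps
        · rintro v ⟨s, hs, hvs⟩ w ⟨t, ht, hwt⟩
          rcases eq_or_ne s t with rfl | hst
          · exact (hc hs).2 v hvs w hwt
          · rcases hchainc hs ht hst with h | h
            · exact (hc ht).2 v (h hvs) w hwt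
            · exact (hc hs).2 v hvs w (h hwt))
      have hVbox : V ⊆ box := hVmax.1.1
      have hVchain := hVmax.1.2
      have hext : ∀ q ∈ box, ¬(∀ v ∈ V, v.1 < q.1 ∧ v.2 < q.2) := by
        intro q hq hcontra
        have hq' : insert q V ∈ Chains := by
          constructor
          · rintro p (rfl | hp)
            · exact hq
            · exact hVbox hp
          · rintro v (rfl | hv) w (rfl | hw)
            · exact Or.inl rfl
            · exact Or.inr (Or.inr (hcontra w hw))
            · exact Or.inr (Or.inl (hcontra v hv))
            · exact hVchain v hv w hw
        have hsub := hVmax.2 hq' (subset_insert q V)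
        have : q ∈ V := hsub (mem_insert q V)
        exact absurd (hcontra q this).1 (lt_irrefl _)
      have hVne : V.Nonempty := by
        by_contra h
        rw [not_nonempty_iff_eq_empty] at h
        obtain ⟨p, hpC, ⟨h1, h2⟩, h3, h4⟩ := hint αs βs le_rfl hαslt le_rfl hβslt
        exact hext p ⟨hpC, h1, h2, h3, h4⟩ (by rw [h]; rintro v ⟨⟩)
      have hnomaxV : ∀ v ∈ V, ∃ w ∈ V, v.1 < w.1 ∧ v.2 < w.2 := by
        intro v hv
        by_contra hcon
        push_neg at hcon
        obtain ⟨hvC, hv1, hv2, hv3, hv4⟩ := hVbox hv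
        obtain ⟨p, hpC, ⟨h1, h2⟩, h3, h4⟩ := hint v.1 v.2 hv1.le hv2 hv3.le hv4
        apply hext p ⟨hpC, lt_trans hv1 h1, h2, lt_trans hv3 h3, h4⟩
        intro w hw
        rcases hVchain w hw v hv with heq | ⟨hc1, hc2⟩ | ⟨hc1, hc2⟩
        · rw [heq]; exact ⟨h1, h3⟩
        · exact ⟨lt_trans hc1 h1, lt_trans hc2 h3⟩
        · exact absurd hc2 (not_lt.2 (hcon w hw hc1))
      set s₁ := sSup (Prod.fst '' V) with hs₁
      set s₂ := sSup (Prod.snd '' V) with hs₂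
      obtain ⟨v₀, hv₀⟩ := id hVne
      have hbox₀ := hVbox hv₀
      have hv₀1 : v₀.1 ≤ s₁ := le_sSup_wf ⟨v₀, hv₀, rfl⟩
      have hv₀2 : v₀.2 ≤ s₂ := le_sSup_wf ⟨v₀, hv₀, rfl⟩
      have hs₁gt : αs < s₁ := lt_of_lt_of_le hbox₀.2.1 hv₀1
      have hs₂gt : βs < s₂ := lt_of_lt_of_le hbox₀.2.2.2.1 hv₀2
      have hs₁le : s₁ ≤ a₀ := sSup_le_wf (hVne.image _)
        (by rintro t ⟨v, hv, rfl⟩; exact (hVbox hv).2.2.1.le)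
      have hs₂le : s₂ ≤ b₀ := sSup_le_wf (hVne.image _)
        (by rintro t ⟨v, hv, rfl⟩; exact (hVbox hv).2.2.2.2.le)
      have hdisj : s₁ = a₀ ∨ s₂ = b₀ := by
        by_contra hcon
        push_neg at hcon
        obtain ⟨h1, h2⟩ := hcon
        obtain ⟨p, hpC, ⟨hp1, hp2⟩, hp3, hp4⟩ := hint s₁ s₂ hs₁gt.le
          (lt_of_le_of_ne hs₁le h1) hs₂gt.le (lt_of_le_of_ne hs₂le h2)
        apply hext p ⟨hpC, lt_trans hs₁gt hp1, hp2, lt_trans hs₂gt hp3, hp4⟩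
        intro w hw
        have hw1 : w.1 ≤ s₁ := le_sSup_wf ⟨w, hw, rfl⟩
        have hw2 : w.2 ≤ s₂ := le_sSup_wf ⟨w, hw, rfl⟩
        exact ⟨lt_of_le_of_lt hw1 hp1, lt_of_le_of_lt hw2 hp3⟩
      have hVC : V ⊆ C := fun v hv => (hVbox hv).1
      have hminV : ∀ p ∈ closure V, p.1 < sSup (Prod.fst '' V) → p ∈ C := by
        intro p hp hlt
        exact hm1 p (closure_mono hVC hp) (lt_of_lt_of_le hlt hs₁le)
      have hsup := probe_chain hC hVC hVne hVchain hnomaxV hminV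
      rcases hdisj with h | h
      · rcases lt_or_eq_of_le hs₂le with h2 | h2
        · have hmem : s₂ ∈ SA := by
            show (a₀, s₂) ∈ C
            rw [← h]
            exact hsup
          exact absurd (hβs s₂ hmem hs₂gt) (not_le.2 h2)
        · apply hbad.2
          rw [← h, ← h2]
          exact hsup
      · rcases lt_or_eq_of_le hs₁le with h2 | h2
        · have hmem : s₁ ∈ SB := by
            show (s₁, b₀) ∈ C
            rw [← h]
            exact hsup
          exact absurd (hαs s₁ hmem hs₁gt) (not_le.2 h2)
        · apply hbad.2
          rw [← h, ← h2]
          exact hsup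
    · -- b₀ has nothing below it: `{b₀}` is open, `SB` is cofinal below `a₀`
      have hopb : IsOpen ({b₀} : Set (WithTop ↥I₂)) :=
        isOpen_singleton_of_bot (not_nonempty_iff_eq_empty.1 hIb)
      obtain ⟨α₀, hα₀⟩ := hIa
      have hcof : ∀ α < a₀, ∃ t ∈ SB, α < t ∧ t < a₀ := by
        intro α hα
        obtain ⟨p, hpC, hpU⟩ := hmeets (Ioc α a₀ ×ˢ {b₀})
          ((isOpen_Ioc_wf _ _).prod hopb) ⟨⟨hα, le_rfl⟩, rfl⟩
        obtain ⟨⟨hp1, hp2⟩, hp3⟩ := hpU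
        have hp3' : p.2 = b₀ := hp3
        have hpSB : p.1 ∈ SB := by
          show (p.1, b₀) ∈ C
          rw [← hp3', Prod.mk.eta]
          exact hpC
        refine ⟨p.1, hpSB, hp1, lt_of_le_of_ne hp2 ?_⟩
        rintro h
        apply hbad.2
        rw [← h, ← hp3', Prod.mk.eta]
        exact hpC
      exact hbad.2 (mem_of_cofinal_closed hSBc hcof hα₀)
  · have hopa : IsOpen ({a₀} : Set (WithTop ↥I₁)) :=
      isOpen_singleton_of_bot (not_nonempty_iff_eq_empty.1 hIa)
    by_cases hIb : (Iio b₀).Nonempty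
    · obtain ⟨β₀, hβ₀⟩ := hIb
      have hcof : ∀ β < b₀, ∃ t ∈ SA, β < t ∧ t < b₀ := by
        intro β hβ
        obtain ⟨p, hpC, hpU⟩ := hmeets ({a₀} ×ˢ Ioc β b₀)
          (hopa.prod (isOpen_Ioc_wf _ _)) ⟨rfl, hβ, le_rfl⟩
        obtain ⟨hp1, hp2, hp3⟩ := hpU
        have hp1' : p.1 = a₀ := hp1
        have hpSA : p.2 ∈ SA := by
          show (a₀, p.2) ∈ C
          rw [← hp1', Prod.mk.eta]
          exact hpC
        refine ⟨p.2, hpSA, hp2, lt_of_le_of_ne hp3 ?_⟩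
        rintro h
        apply hbad.2
        rw [← h, ← hp1', Prod.mk.eta]
        exact hpC
      exact hbad.2 (mem_of_cofinal_closed hSAc hcof hβ₀)
    · have hopb : IsOpen ({b₀} : Set (WithTop ↥I₂)) :=
        isOpen_singleton_of_bot (not_nonempty_iff_eq_empty.1 hIb)
      obtain ⟨p, hpC, hpU⟩ := hmeets ({a₀} ×ˢ {b₀}) (hopa.prod hopb) ⟨rfl, rfl⟩
      apply hbad.2
      have h1 : p.1 = a₀ := hpU.1
      have h2 : p.2 = b₀ := hpU.2
      rw [← h1, ← h2, Prod.mk.eta]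
      exact hpC

end TwoDim

section Tube

variable {J : Type v} [LinearOrder J] [WellFoundedLT J]

/-- Tube lemma, basic-compactum edition: pulling back a `J`-closed subset of `P × Y` along a
compact Hausdorff test in the `Y`-coordinate yields a closed set. -/
theorem tube_P {I : Set J} {Y : Type w} [TopologicalSpace Y] (hY : IsJConvergence J Y)
    {C : Set (WithTop ↥I × Y)} (hC : JClosedSet J (WithTop ↥I × Y) C)
    {K : Type*} [TopologicalSpace K] [CompactSpace K] [T2Space K]
    {s : K → Y} (hs : Continuous s) :
    IsClosed ((fun p : WithTop ↥I × K => (p.1, s p.2)) ⁻¹' C) := by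
  rw [← isOpen_compl_iff, isOpen_iff_forall_mem_open]
  rintro ⟨z₀, k₀⟩ hzk
  have hzk' : (z₀, s k₀) ∉ C := hzk
  have hT : IsClosed {z : WithTop ↥I | (z, s k₀) ∈ C} :=
    jclosed_isClosed_one (JClosedSet.preimage hC (continuous_id.prodMk continuous_const))
  obtain ⟨R, hRn, hRc, hRsub⟩ :=
    exists_mem_nhds_isClosed_subset (hT.isOpen_compl.mem_nhds hzk')
  have hRcomp : CompactSpace ↥R := isCompact_iff_compactSpace.1 hRc.isCompact
  set W' : Set Y := {y | ∀ z ∈ R, (z, y) ∉ C} with hW'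
  have hW'open : IsOpen W' := by
    apply isOpen_of_probe_preimages hY
    intro I' hI' t ht
    have hC'' : JClosedSet J (WithTop ↥I × WithTop ↥I')
        ((fun q : WithTop ↥I × WithTop ↥I' => (q.1, t q.2)) ⁻¹' C) :=
      JClosedSet.preimage hC (continuous_fst.prodMk (ht.comp continuous_snd))
    have hE : IsClosed {q : ↥R × WithTop ↥I' | ((q.1 : WithTop ↥I), t q.2) ∈ C} := by
      have h1 := jclosed_isClosed_prod hC''
      have h2 : Continuous fun q : ↥R × WithTop ↥I' => ((q.1 : WithTop ↥I), q.2) :=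
        (continuous_subtype_val.comp continuous_fst).prodMk continuous_snd
      exact h1.preimage h2
    have himg : t ⁻¹' W' =
        (Prod.snd '' {q : ↥R × WithTop ↥I' | ((q.1 : WithTop ↥I), t q.2) ∈ C})ᶜ := by
      ext w
      simp only [mem_preimage, hW', mem_setOf_eq, mem_compl_iff, mem_image, not_exists]
      constructor
      · intro hw q
        rintro ⟨hq, rfl⟩
        exact hw q.1 q.1.2 hq
      · intro h z hz hcon
        exact h (⟨z, hz⟩, w) ⟨hcon, rfl⟩
    rw [himg]
    exact (isClosedMap_snd_of_compactSpace _ hE).isOpen_compl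
  refine ⟨interior R ×ˢ (s ⁻¹' W'), ?_, isOpen_interior.prod (hW'open.preimage hs), ?_, ?_⟩
  · rintro ⟨z, k⟩ ⟨hz, hk⟩
    exact hk z (interior_subset hz)
  · exact mem_interior_iff_mem_nhds.2 hRn
  · intro z hz
    exact hRsub hz

/-- Tube lemma, general edition: pulling back a `J`-closed subset of `X × Y` along a compact
Hausdorff test in the `Y`-coordinate yields a closed subset of `X × K`. -/
theorem tube_X {X : Type u} {Y : Type w} [TopologicalSpace X] [TopologicalSpace Y]
    (hX : IsJConvergence J X) (hY : IsJConvergence J Y)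
    {C : Set (X × Y)} (hC : JClosedSet J (X × Y) C)
    {K : Type*} [TopologicalSpace K] [CompactSpace K] [T2Space K]
    {s : K → Y} (hs : Continuous s) :
    IsClosed ((fun p : X × K => (p.1, s p.2)) ⁻¹' C) := by
  rw [← isOpen_compl_iff, isOpen_iff_forall_mem_open]
  rintro ⟨x₀, k₀⟩ hxk
  have hxk' : (x₀, s k₀) ∉ C := hxk
  have hSl : IsClosed {y : Y | (x₀, y) ∈ C} :=
    JClosedSet.isClosed hY (JClosedSet.preimage hC (Continuous.prodMk_right x₀))
  have hk₀ : k₀ ∈ s ⁻¹' {y : Y | (x₀, y) ∈ C}ᶜ := hxk'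
  obtain ⟨Q, hQn, hQc, hQsub⟩ :=
    exists_mem_nhds_isClosed_subset (((hSl.isOpen_compl).preimage hs).mem_nhds hk₀)
  have hQcomp : CompactSpace ↥Q := isCompact_iff_compactSpace.1 hQc.isCompact
  set V : Set X := {x | ∀ k ∈ Q, (x, s k) ∉ C} with hV
  have hVopen : IsOpen V := by
    apply isOpen_of_probe_preimages hX
    intro I' hI' t ht
    have hC' : JClosedSet J (WithTop ↥I' × Y)
        ((fun p : WithTop ↥I' × Y => (t p.1, p.2)) ⁻¹' C) :=
      JClosedSet.preimage hC ((ht.comp continuous_fst).prodMk continuous_snd)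
    have hE := tube_P hY hC' (hs.comp continuous_subtype_val)
      (K := ↥Q)
    have himg : t ⁻¹' V =
        (Prod.fst '' ((fun p : WithTop ↥I' × ↥Q => (p.1, s ((fun q : ↥Q => (q : K)) p.2))) ⁻¹'
          ((fun p : WithTop ↥I' × Y => (t p.1, p.2)) ⁻¹' C)))ᶜ := by
      ext z
      simp only [mem_preimage, hV, mem_setOf_eq, mem_compl_iff, mem_image, not_exists]
      constructor
      · intro hz q
        rintro ⟨hq, rfl⟩
        exact hz q.2 q.2.2 hq
      · intro h k hk hcon
        exact h (z, ⟨k, hk⟩) ⟨hcon, rfl⟩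
    rw [himg]
    exact (isClosedMap_fst_of_compactSpace _ hE).isOpen_compl
  refine ⟨V ×ˢ interior Q, ?_, hVopen.prod isOpen_interior, ?_, ?_⟩
  · rintro ⟨x, k⟩ ⟨hx, hk⟩
    exact hx k (interior_subset hk)
  · intro k hk
    exact hQsub hk
  · exact mem_interior_iff_mem_nhds.2 hQn

end Tube

-- STATEMENT 17
theorem stmt17 {J : Type v} [LinearOrder J] [WellFoundedLT J] [TopologicalSpace J]
    [OrderTopology J] [NoncompactSpace J] {X : Type u} {Y : Type w}
    [TopologicalSpace X] [TopologicalSpace Y]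
    (hX : IsJConvergence J X) (hY : IsJConvergence J Y) :
    kTop.{v} (X × Y) = jTop J (X × Y) := by
  have hset : {U : Set (X × Y) |
      ∀ (K : Type v) (tK : TopologicalSpace K), @CompactSpace K tK → @T2Space K tK →
        ∀ f : K → X × Y, Continuous[tK, _] f → IsOpen[tK] (f ⁻¹' U)} =
      {U : Set (X × Y) | JOpenSet J (X × Y) U} := by
    ext U
    simp only [mem_setOf_eq]
    constructor
    · -- every `k`-generating set is `J`-open
      intro hU
      intro I hI f hf hfi
      intro hft
      have hopen : IsOpen (f ⁻¹' U) :=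
        hU (WithTop ↥I) _ inferInstance inferInstance f hf
      have htop : (⊤ : WithTop ↥I) ∈ f ⁻¹' U := hft
      rcases mem_closure_iff.1 (top_mem_closure_range hI) _ hopen htop with ⟨y, hy1, i, rfl⟩
      exact (hfi i) hy1
    · -- every `J`-open set is `k`-open
      intro hU
      intro K tK hcomp ht2 f hfcont
      letI := tK
      haveI := hcomp
      haveI := ht2
      have hC : JClosedSet J (X × Y) Uᶜ := hU
      have hD : IsClosed ((fun p : X × K => (p.1, (fun k => (f k).2) p.2)) ⁻¹' Uᶜ) :=
        tube_X hX hY hC (continuous_snd.comp hfcont)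
      have hfeq : f ⁻¹' Uᶜ =
          (fun k : K => ((f k).1, k)) ⁻¹' ((fun p : X × K => (p.1, (fun k => (f k).2) p.2)) ⁻¹' Uᶜ) := by
        ext k
        simp only [mem_preimage, mem_compl_iff, Prod.mk.eta]
      have hclosed : IsClosed (f ⁻¹' Uᶜ) := by
        rw [hfeq]
        exact hD.preimage ((continuous_fst.comp hfcont).prodMk continuous_id)
      have : f ⁻¹' U = (f ⁻¹' Uᶜ)ᶜ := by
        rw [preimage_compl, compl_compl]
      rw [this]
      exact hclosed.isOpen_compl
  exact congrArg TopologicalSpace.generateFrom hset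
end

section
/- Fix a non-compact well-ordered space J. Every J-unique convergence space is T₁. -/
open Set Topology TopologicalSpace

universe u v w

instance withTopOrderTopology_order {α : Type*} [Preorder α] :
    OrderTopology (WithTop α) := ⟨rfl⟩

theorem stmt18_noMax {J : Type v} [LinearOrder J] [WellFoundedLT J] [TopologicalSpace J]
    [OrderTopology J] [NoncompactSpace J] : NoMaxOrder J := by
  constructor
  intro m
  by_contra hm
  push_neg at hm
  have hne : Nonempty J := Nonempty.intro m
  letI : Bot J := ⟨(IsWellFounded.wf (r := (· < · : J → J → Prop))).min univ univ_nonempty⟩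
  letI : OrderBot J :=
    ⟨fun a => not_lt.1 ((IsWellFounded.wf (r := (· < · : J → J → Prop))).not_lt_min univ
      (mem_univ a))⟩
  letI := WellFoundedLT.conditionallyCompleteLinearOrderBot J
  have : IsCompact (univ : Set J) := by
    have h1 : (univ : Set J) = Icc ⊥ m := by ext a; simp [hm a]
    rw [h1]; exact isCompact_Icc
  exact NoncompactSpace.noncompact_univ this

theorem stmt18_almostClosed_univ {J : Type v} [LinearOrder J] [WellFoundedLT J]
    [TopologicalSpace J] [OrderTopology J] [NoncompactSpace J] :
    AlmostClosed (univ : Set J) := by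
  have hne : Nonempty J := by
    by_contra h
    haveI : IsEmpty J := not_nonempty_iff.mp h
    exact (NoncompactSpace.noncompact_univ (X := J))
      (by rw [Set.univ_eq_empty_iff.mpr ‹IsEmpty J›]; exact isCompact_empty)
  have hnm : NoMaxOrder J := stmt18_noMax
  have himg : (fun j : J => (j : WithTop J)) '' univ = range (WithTop.some : J → WithTop J) := by
    rw [image_univ]
  have htopmem : (⊤ : WithTop J) ∈ closure (range (WithTop.some : J → WithTop J)) := by
    rw [mem_closure_iff_nhds]
    intro U hU
    obtain ⟨j₀⟩ := hne
    obtain ⟨l, hl, hsub⟩ := exists_Ioc_subset_of_mem_nhds' hU (WithTop.coe_lt_top j₀)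
    obtain ⟨l', rfl⟩ : ∃ l' : J, l = WithTop.some l' := by
      cases l with
      | top => exact absurd hl.2 (lt_irrefl _)
      | coe l' => exact ⟨l', rfl⟩
    obtain ⟨k, hk⟩ := hnm.exists_gt l'
    exact ⟨WithTop.some k, hsub ⟨by exact_mod_cast hk, le_top⟩, k, rfl⟩
  refine ⟨⊤, ?_, ?_⟩
  · rw [himg, WithTop.range_coe]
    ext z
    simp only [mem_diff, mem_Iio, mem_singleton_iff, not_lt, top_le_iff]
    constructor
    · rintro ⟨_, hz⟩; exact hz
    · rintro rfl
      refine ⟨?_, rfl⟩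
      rw [WithTop.range_coe] at htopmem; exact htopmem
  · constructor
    · rintro i ⟨j, -, rfl⟩
      exact WithTop.coe_lt_top j
    · intro s hs
      rw [top_le_iff]
      cases s with
      | top => rfl
      | coe k => exact absurd (hs (WithTop.some k) ⟨k, mem_univ k, rfl⟩) (lt_irrefl _)


-- STATEMENT 18
theorem stmt18 {J : Type v} [LinearOrder J] [WellFoundedLT J] [TopologicalSpace J]
    [OrderTopology J] [NoncompactSpace J] {X : Type u} [TopologicalSpace X]
    (h : JUnique J X) : T1Space X := by
  rw [t1Space_iff_exists_open]
  by_contra hcon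
  simp only [Pairwise] at hcon
  push_neg at hcon
  obtain ⟨x, y, hxy, hspec⟩ := hcon
  -- every open set containing x contains y
  set I : Set J := univ
  set f : WithTop ↥I → X := fun _ => y
  set g : WithTop ↥I → X := fun z => if z = ⊤ then x else y
  have hf : Continuous f := continuous_const
  have hg : Continuous g := by
    rw [continuous_def]
    intro U hU
    by_cases hx : x ∈ U
    · have hy : y ∈ U := hspec U hU hx
      have : g ⁻¹' U = univ := by
        ext z; simp only [mem_preimage, mem_univ, iff_true, g]
        split <;> assumption
      rw [this]; exact isOpen_univ
    · by_cases hy : y ∈ U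
      · have : g ⁻¹' U = Iio ⊤ := by
          ext z
          simp only [mem_preimage, mem_Iio, lt_top_iff_ne_top, g]
          split <;> simp_all
        rw [this]; exact isOpen_Iio
      · have : g ⁻¹' U = ∅ := by
          ext z; simp only [mem_preimage, mem_empty_iff_false, iff_false, g]
          split <;> assumption
        rw [this]; exact isOpen_empty
  have heq := h I stmt18_almostClosed_univ f g hf hg (fun i => rfl)
  have : f ⊤ = g ⊤ := by rw [heq]
  simp only [f, g, if_pos rfl] at this
  exact hxy this.symm
end
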